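/- arXiv:2102.08031 — 3 statements merged into one kernel-verified Lean document; each statement's English description precedes it below -/
import Mathlib

section
/- Let n ∈ ℕ and let f, g : (ℂ∖ℝ)^n → ℂ be holomorphic functions, each satisfying the symmetry formula and the variable non-dependence property. If f(z) = g(z) for all z ∈ ℂ^{+n}, then f(z) = g(z) for all z ∈ (ℂ∖ℝ)^n. (Equivalently: a holomorphic function on (ℂ∖ℝ)^n satisfying the symmetry formula and the variable non-dependence property is uniquely determined by its values in ℂ^{+n}.) -/
open Complex MeasureTheory Finset Filter Topology

/-- The kernel `K_n`. -/
noncomputable def kernelK (n : ℕ) (z : Fin n → ℂ) (t : Fin n → ℝ) : ℂ :=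
  Complex.I * ((2 / (2 * Complex.I) ^ n) *
      ∏ ℓ : Fin n, (((t ℓ : ℂ) - z ℓ)⁻¹ - ((t ℓ : ℂ) + Complex.I)⁻¹) -
    (1 / (2 * Complex.I) ^ n) *
      ∏ ℓ : Fin n, (((t ℓ : ℂ) - Complex.I)⁻¹ - ((t ℓ : ℂ) + Complex.I)⁻¹))

/-- The selective conjugation map `Ψ_B`. -/
noncomputable def PsiMap (n : ℕ) (B : Finset (Fin n)) (z w : Fin n → ℂ) : Fin n → ℂ :=
  fun j => if j ∈ B then (starRingEnd ℂ) (w j) else z j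

/-- The poly cut-plane `(ℂ∖ℝ)^n`. -/
def polyCutPlane (n : ℕ) : Set (Fin n → ℂ) := {z | ∀ j, (z j).im ≠ 0}

/-- The poly upper half-plane `ℂ^{+n}`. -/
def upperPoly (n : ℕ) : Set (Fin n → ℂ) := {z | ∀ j, 0 < (z j).im}

/-- The growth condition for a positive Borel measure on `ℝ^n`. -/
def GrowthCondition (n : ℕ) (μ : Measure (Fin n → ℝ)) : Prop :=
  ∫⁻ t, ENNReal.ofReal (∏ ℓ : Fin n, (1 + (t ℓ) ^ 2)⁻¹) ∂μ < ⊤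

/-- The factors `N_{-1}, N_0, N_1`. -/
noncomputable def Nfun (ρ : ℤ) (z : ℂ) (t : ℝ) : ℂ :=
  if ρ = -1 then (1 / (2 * Complex.I)) * (((t : ℂ) - z)⁻¹ - ((t : ℂ) - Complex.I)⁻¹)
  else if ρ = 0 then
    (1 / (2 * Complex.I)) * (((t : ℂ) - Complex.I)⁻¹ - ((t : ℂ) + Complex.I)⁻¹)
  else (1 / (2 * Complex.I)) * (((t : ℂ) + Complex.I)⁻¹ - ((t : ℂ) - (starRingEnd ℂ) z)⁻¹)

/-- The Nevanlinna condition for a positive Borel measure on `ℝ^n`: the sum runs over all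
`ρ ∈ {-1,0,1}^n` containing both `-1` and `1` (encoded via `Fin 3`, `k ↦ k - 1`). -/
def NevanlinnaCondition (n : ℕ) (μ : Measure (Fin n → ℝ)) : Prop :=
  ∀ z : Fin n → ℂ, (∀ j, 0 < (z j).im) →
    ∑ ρ ∈ Finset.univ.filter
        (fun ρ : Fin n → Fin 3 => (∃ j, ρ j = 0) ∧ (∃ j, ρ j = 2)),
      ∫ t, ∏ j : Fin n, Nfun ((ρ j : ℤ) - 1) (z j) (t j) ∂μ = 0

/-- The symmetry formula for a function on the poly cut-plane. -/
def SymmetryFormula (n : ℕ) (f : (Fin n → ℂ) → ℂ) : Prop :=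
  ∀ z ∈ polyCutPlane n,
    f z = ∑ B ∈ Finset.univ.powerset.filter (fun B : Finset (Fin n) => B ≠ ∅),
      (-1 : ℂ) ^ (B.card + 1) *
        (starRingEnd ℂ) (f (PsiMap n B (fun _ => Complex.I) z))

/-- The variable non-dependence property. -/
def VarNonDep (n : ℕ) (f : (Fin n → ℂ) → ℂ) : Prop :=
  ∀ z ∈ polyCutPlane n, ∀ w ∈ polyCutPlane n,
    (∃ j, (z j).im < 0) → (∀ j, (z j).im < 0 ↔ (w j).im < 0) →
    (∀ j, (z j).im < 0 → z j = w j) → f z = f w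

/-- The upper Stoltz domain with centre `0` and angle `θ`. -/
def upperStoltz (θ : ℝ) : Set ℂ :=
  {w | 0 < w.im ∧ θ ≤ Complex.arg w ∧ Complex.arg w ≤ Real.pi - θ}

/-- The lower Stoltz domain with centre `0` and angle `θ`. -/
def lowerStoltz (θ : ℝ) : Set ℂ :=
  {w | (starRingEnd ℂ) w ∈ upperStoltz θ}

/-- The filter of `|w| → ∞` within a set `S ⊆ ℂ`. -/
noncomputable def stoltzFilter (S : Set ℂ) : Filter ℂ :=
  (Filter.comap (fun w : ℂ => ‖w‖) Filter.atTop) ⊓ Filter.principal S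

/-- Proposition 3.2: a holomorphic function on the poly cut-plane satisfying the symmetry
formula and the variable non-dependence property is uniquely determined by its values on
the poly upper half-plane. -/
theorem symmetry_uniqueness
    (n : ℕ) (f g : (Fin n → ℂ) → ℂ)
    (hf : DifferentiableOn ℂ f (polyCutPlane n))
    (hg : DifferentiableOn ℂ g (polyCutPlane n))
    (hfSym : SymmetryFormula n f) (hgSym : SymmetryFormula n g)
    (hfDep : VarNonDep n f) (hgDep : VarNonDep n g)
    (heq : ∀ z ∈ upperPoly n, f z = g z) :
    ∀ z ∈ polyCutPlane n, f z = g z := by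
  classical
  -- work with h = f - g
  set h : (Fin n → ℂ) → ℂ := fun z => f z - g z with hh
  suffices H : ∀ z ∈ polyCutPlane n, h z = 0 by
    intro z hz; have := H z hz; simpa [hh, sub_eq_zero] using this
  have hUp : ∀ z ∈ upperPoly n, h z = 0 := by
    intro z hz; simp [hh, heq z hz]
  have hDep : ∀ z ∈ polyCutPlane n, ∀ w ∈ polyCutPlane n,
      (∃ j, (z j).im < 0) → (∀ j, (z j).im < 0 ↔ (w j).im < 0) →
      (∀ j, (z j).im < 0 → z j = w j) → h z = h w := by
    intro z hz w hw h1 h2 h3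
    simp only [hh]
    rw [hfDep z hz w hw h1 h2 h3, hgDep z hz w hw h1 h2 h3]
  have hSym : ∀ z ∈ polyCutPlane n,
      h z = ∑ B ∈ Finset.univ.powerset.filter (fun B : Finset (Fin n) => B ≠ ∅),
        (-1 : ℂ) ^ (B.card + 1) *
          (starRingEnd ℂ) (h (PsiMap n B (fun _ => Complex.I) z)) := by
    intro z hz
    simp only [hh, map_sub, mul_sub]
    rw [Finset.sum_sub_distrib, ← hfSym z hz, ← hgSym z hz]
  -- the special points
  set pt : Finset (Fin n) → (Fin n → ℂ) :=
    fun S j => if j ∈ S then -Complex.I else Complex.I with hpt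
  have hptCut : ∀ S, pt S ∈ polyCutPlane n := by
    intro S j
    by_cases hj : j ∈ S <;> simp [hpt, hj]
  have hptNeg : ∀ S j, ((pt S) j).im < 0 ↔ j ∈ S := by
    intro S j; by_cases hj : j ∈ S <;> simp [hpt, hj]
  intro z hz
  by_cases hneg : ∃ j, (z j).im < 0
  · -- T = set of negative indices
    set T : Finset (Fin n) := Finset.univ.filter (fun j => (z j).im < 0) with hT
    have hTmem : ∀ j, j ∈ T ↔ (z j).im < 0 := by
      intro j; simp [hT]
    have hTne : T ≠ ∅ := by
      obtain ⟨j, hj⟩ := hneg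
      exact Finset.ne_empty_of_mem ((hTmem j).2 hj)
    -- replace positive coordinates by I
    set z' : Fin n → ℂ := fun j => if j ∈ T then z j else Complex.I with hz'
    have hz'Cut : z' ∈ polyCutPlane n := by
      intro j
      by_cases hj : j ∈ T
      · simpa [hz', hj] using hz j
      · simp [hz', hj]
    have hz'Neg : ∀ j, (z' j).im < 0 ↔ j ∈ T := by
      intro j
      by_cases hj : j ∈ T
      · simp [hz', hj, (hTmem j).1 hj]
      · simp [hz', hj]
    have hz'Pos : ∀ j, j ∉ T → 0 < (z' j).im := by
      intro j hj; simp [hz', hj]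
    have step1 : h z = h z' := by
      refine hDep z hz z' hz'Cut hneg (fun j => ?_) (fun j hj => ?_)
      · rw [hz'Neg j, hTmem j]
      · simp [hz', (hTmem j).2 hj]
    -- evaluate each term of the symmetry formula at z'
    have step2 : h z' = ∑ B ∈ Finset.univ.powerset.filter (fun B : Finset (Fin n) => B ≠ ∅),
        (if B \ T = ∅ then 0 else
          (-1 : ℂ) ^ (B.card + 1) * (starRingEnd ℂ) (h (pt (B \ T)))) := by
      rw [hSym z' hz'Cut]
      refine Finset.sum_congr rfl (fun B hB => ?_)
      set w : Fin n → ℂ := PsiMap n B (fun _ => Complex.I) z' with hw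
      have hwval : ∀ j, w j = if j ∈ B then (starRingEnd ℂ) (z' j) else Complex.I := by
        intro j; simp [hw, PsiMap]
      by_cases hBT : B \ T = ∅
      · -- B ⊆ T : the point lies in the upper poly half-plane
        have hBsub : B ⊆ T := Finset.sdiff_eq_empty_iff_subset.1 hBT
        have hwUp : w ∈ upperPoly n := by
          intro j
          rw [hwval j]
          by_cases hj : j ∈ B
          · have : (z' j).im < 0 := (hz'Neg j).2 (hBsub hj)
            simp only [hj, if_pos, Complex.conj_im]
            linarith
          · simp [hj]
        rw [if_pos hBT, hUp w hwUp]
        simp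
      · -- B ⊄ T : reduce to the constant point pt (B \ T)
        have hwNeg : ∀ j, (w j).im < 0 ↔ j ∈ B \ T := by
          intro j
          rw [hwval j]
          by_cases hj : j ∈ B
          · by_cases hjT : j ∈ T
            · have : (z' j).im < 0 := (hz'Neg j).2 hjT
              simp only [hj, if_pos, Complex.conj_im, Finset.mem_sdiff]
              constructor
              · intro hlt; linarith
              · rintro ⟨-, hc⟩; exact absurd hjT hc
            · have : 0 < (z' j).im := hz'Pos j hjT
              simp only [hj, if_pos, Complex.conj_im, Finset.mem_sdiff]
              constructor
              · intro _; exact ⟨by simpa using hj, hjT⟩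
              · intro _; linarith
          · simp [hj, Finset.mem_sdiff]
        have hwCut : w ∈ polyCutPlane n := by
          intro j
          rw [hwval j]
          by_cases hj : j ∈ B
          · simp only [hj, if_pos, Complex.conj_im]
            have := hz'Cut j
            intro hc
            exact this (by linarith [neg_eq_zero.1 hc])
          · simp [hj]
        obtain ⟨j0, hj0⟩ := Finset.nonempty_iff_ne_empty.2 hBT
        have hwex : ∃ j, (w j).im < 0 := ⟨j0, (hwNeg j0).2 hj0⟩
        have hwpt : ∀ j, j ∈ B \ T → w j = -Complex.I := by
          intro j hj
          have hjB : j ∈ B := (Finset.mem_sdiff.1 hj).1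
          have hjT : j ∉ T := (Finset.mem_sdiff.1 hj).2
          rw [hwval j, if_pos hjB]
          simp [hz', hjT]
        have : h w = h (pt (B \ T)) := by
          refine hDep w hwCut (pt (B \ T)) (hptCut _) hwex (fun j => ?_) (fun j hj => ?_)
          · rw [hwNeg j, hptNeg (B \ T) j]
          · rw [hwpt j ((hwNeg j).1 hj)]
            simp [hpt, (hwNeg j).1 hj]
        rw [if_neg hBT, this]
    -- now compute the sum via the bijection B ↦ (B ∩ T, B \ T)
    rw [step1, step2]
    have hsplit :
        ∑ B ∈ Finset.univ.powerset.filter (fun B : Finset (Fin n) => B ≠ ∅),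
          (if B \ T = ∅ then 0 else
            (-1 : ℂ) ^ (B.card + 1) * (starRingEnd ℂ) (h (pt (B \ T))))
        = ∑ p ∈ T.powerset ×ˢ (Tᶜ.powerset.filter (fun S : Finset (Fin n) => S ≠ ∅)),
            (-1 : ℂ) ^ (p.1.card + p.2.card + 1) * (starRingEnd ℂ) (h (pt p.2)) := by
      have e1 : ∑ B ∈ Finset.univ.powerset.filter (fun B : Finset (Fin n) => B ≠ ∅),
          (if B \ T = ∅ then 0 else
            (-1 : ℂ) ^ (B.card + 1) * (starRingEnd ℂ) (h (pt (B \ T))))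
          = ∑ B ∈ Finset.univ.powerset.filter (fun B : Finset (Fin n) => B \ T ≠ ∅),
            (-1 : ℂ) ^ (B.card + 1) * (starRingEnd ℂ) (h (pt (B \ T))) := by
        rw [Finset.sum_filter]
        rw [Finset.sum_filter]
        refine Finset.sum_congr rfl (fun B _ => ?_)
        by_cases hB0 : B = ∅
        · simp [hB0]
        · by_cases hBT : B \ T = ∅ <;> simp [hB0, hBT]
      rw [e1]
      refine Finset.sum_nbij' (fun B => (B ∩ T, B \ T)) (fun p => p.1 ∪ p.2) ?_ ?_ ?_ ?_ ?_
      · intro B hB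
        simp only [Finset.mem_filter, Finset.mem_powerset] at hB
        simp only [Finset.mem_product, Finset.mem_powerset, Finset.mem_filter]
        refine ⟨Finset.inter_subset_right, ⟨?_, hB.2⟩⟩
        intro x hx
        simp only [Finset.mem_sdiff] at hx
        simpa using hx.2
      · intro p hp
        simp only [Finset.mem_product, Finset.mem_powerset, Finset.mem_filter] at hp
        obtain ⟨hp1, ⟨hp2, hp2ne⟩⟩ := hp
        have hDiff : (p.1 ∪ p.2) \ T = p.2 := by
          ext x
          simp only [Finset.mem_sdiff, Finset.mem_union]
          constructor
          · rintro ⟨hx1 | hx2, hxT⟩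
            · exact absurd (hp1 hx1) hxT
            · exact hx2
          · intro hx
            exact ⟨Or.inr hx, Finset.mem_compl.1 (hp2 hx)⟩
        simp only [Finset.mem_filter, Finset.mem_powerset]
        exact ⟨Finset.subset_univ _, by rw [hDiff]; exact hp2ne⟩
      · intro B hB
        simp only
        rw [Finset.union_comm]
        exact Finset.sdiff_union_inter B T
      · intro p hp
        simp only [Finset.mem_product, Finset.mem_powerset, Finset.mem_filter] at hp
        obtain ⟨hp1, ⟨hp2, hp2ne⟩⟩ := hp
        have hDiff : (p.1 ∪ p.2) \ T = p.2 := by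
          ext x
          simp only [Finset.mem_sdiff, Finset.mem_union]
          constructor
          · rintro ⟨hx1 | hx2, hxT⟩
            · exact absurd (hp1 hx1) hxT
            · exact hx2
          · intro hx
            exact ⟨Or.inr hx, Finset.mem_compl.1 (hp2 hx)⟩
        have hInter : (p.1 ∪ p.2) ∩ T = p.1 := by
          ext x
          simp only [Finset.mem_inter, Finset.mem_union]
          constructor
          · rintro ⟨hx1 | hx2, hxT⟩
            · exact hx1
            · exact absurd hxT (Finset.mem_compl.1 (hp2 hx2))
          · intro hx
            exact ⟨Or.inl hx, hp1 hx⟩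
        simp [hDiff, hInter]
      · intro B hB
        have hcard : B.card = (B ∩ T).card + (B \ T).card :=
          (Finset.card_inter_add_card_sdiff B T).symm
        simp only
        rw [← hcard]
    rw [hsplit, Finset.sum_product]
    have : ∀ A ∈ T.powerset,
        ∑ S ∈ Tᶜ.powerset.filter (fun S : Finset (Fin n) => S ≠ ∅),
          (-1 : ℂ) ^ (A.card + S.card + 1) * (starRingEnd ℂ) (h (pt S))
        = (-1 : ℂ) ^ A.card *
          ∑ S ∈ Tᶜ.powerset.filter (fun S : Finset (Fin n) => S ≠ ∅),
            (-1 : ℂ) ^ (S.card + 1) * (starRingEnd ℂ) (h (pt S)) := by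
      intro A _
      rw [Finset.mul_sum]
      refine Finset.sum_congr rfl (fun S _ => ?_)
      ring
    rw [Finset.sum_congr rfl this, ← Finset.sum_mul]
    have hzero : ∑ A ∈ T.powerset, (-1 : ℂ) ^ A.card = 0 := by
      have := Finset.sum_powerset_neg_one_pow_card_of_nonempty
        (Finset.nonempty_iff_ne_empty.2 hTne)
      have hcast : ((∑ m ∈ T.powerset, (-1 : ℤ) ^ m.card : ℤ) : ℂ) = 0 := by
        rw [this]; simp
      push_cast at hcast
      exact hcast
    rw [hzero, zero_mul]
  · -- all coordinates in the upper half-plane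
    push_neg at hneg
    refine hUp z (fun j => ?_)
    rcases lt_or_gt_of_ne (hz j) with hlt | hgt
    · exact absurd hlt (not_lt.2 (hneg j))
    · exact hgt
end

section
/- Let n ≥ 2, let a ∈ ℝ, and let μ be a positive Borel measure on ℝ^n satisfying the growth condition and the Nevanlinna condition. Define f : (ℂ∖ℝ)^n → ℂ by f(z) := a + π^{−n} ∫_{ℝ^n} K_n(z,t) dμ(t) (the symmetric extension of a Herglotz-Nevanlinna function with b = 0). Then f satisfies the variable non-dependence property: if z ∈ (ℂ∖ℝ)^n is such that Im z_j < 0 for some index j ∈ {1,…,n}, then the value f(z) does not depend on the components of z that lie in ℂ^+. -/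
open Complex MeasureTheory Finset Filter Topology

open scoped ENNReal NNReal

lemma key_normSq {R m : ℝ} (hm : 0 < m) (z : ℂ) (hzim : m ≤ |z.im|) (hzre : |z.re| ≤ R)
    (t : ℝ) : 1 + t ^ 2 ≤ (2 + (1 + 2 * R ^ 2) / m ^ 2) * Complex.normSq ((t : ℂ) - z) := by
  have h1 : Complex.normSq ((t:ℂ) - z) = (t - z.re)^2 + z.im^2 := by
    simp [Complex.normSq_apply, Complex.sub_re, Complex.sub_im, Complex.ofReal_re,
      Complex.ofReal_im]; ring
  rw [h1]
  have hm2 : 0 < m^2 := by positivity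
  have h2 : m^2 ≤ z.im^2 := by
    have h := _root_.sq_abs z.im
    nlinarith [sq_nonneg (|z.im| - m), abs_nonneg z.im]
  have h3 : z.re^2 ≤ R^2 := by
    have h := _root_.sq_abs z.re
    nlinarith [abs_nonneg z.re, sq_nonneg (R - |z.re|)]
  have h4 : (1 + 2*R^2)/m^2 * m^2 = 1 + 2*R^2 := by field_simp
  have h5 : 0 ≤ (1 + 2*R^2)/m^2 := by positivity
  nlinarith [sq_nonneg (t - z.re), sq_nonneg (t - 2*z.re), sq_nonneg z.im,
    mul_le_mul_of_nonneg_left h2 h5]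

lemma inv_prod_norm_le {Ka Kb : ℝ} (hKa : 0 ≤ Ka) (hKb : 0 ≤ Kb) (a b : ℂ) (t : ℝ)
    (ha : 1 + t ^ 2 ≤ Ka * Complex.normSq ((t : ℂ) - a))
    (hb : 1 + t ^ 2 ≤ Kb * Complex.normSq ((t : ℂ) - b)) :
    ‖((t : ℂ) - a)⁻¹‖ * ‖((t : ℂ) - b)⁻¹‖ ≤ Real.sqrt (Ka * Kb) * (1 + t ^ 2)⁻¹ := by
  have ht : (0:ℝ) < 1 + t^2 := by positivity
  have hSa : 0 < Complex.normSq ((t:ℂ) - a) := by nlinarith [Complex.normSq_nonneg ((t:ℂ)-a)]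
  have hSb : 0 < Complex.normSq ((t:ℂ) - b) := by nlinarith [Complex.normSq_nonneg ((t:ℂ)-b)]
  have na : ‖((t : ℂ) - a)⁻¹‖ = (Real.sqrt (Complex.normSq ((t:ℂ)-a)))⁻¹ := by
    rw [norm_inv, Complex.norm_def]
  have nb : ‖((t : ℂ) - b)⁻¹‖ = (Real.sqrt (Complex.normSq ((t:ℂ)-b)))⁻¹ := by
    rw [norm_inv, Complex.norm_def]
  rw [na, nb, ← mul_inv]
  set Sa := Complex.normSq ((t:ℂ)-a)
  set Sb := Complex.normSq ((t:ℂ)-b)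
  have hP : 0 < Real.sqrt Sa * Real.sqrt Sb := by positivity
  have h6 : (1 + t^2)^2 ≤ (Ka * Kb) * (Sa * Sb) := by nlinarith
  have key : (1 + t^2) ≤ Real.sqrt (Ka * Kb) * (Real.sqrt Sa * Real.sqrt Sb) := by
    have h7 := Real.sqrt_le_sqrt h6
    rwa [Real.sqrt_sq ht.le, Real.sqrt_mul (by positivity), Real.sqrt_mul hSa.le] at h7
  rw [inv_eq_one_div, show Real.sqrt (Ka*Kb) * (1+t^2)⁻¹ = Real.sqrt (Ka*Kb)/(1+t^2) by ring,
    div_le_div_iff₀ hP ht, one_mul]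
  linarith [key]

lemma ofReal_sub_ne {a : ℂ} (ha : a.im ≠ 0) (t : ℝ) : (t : ℂ) - a ≠ 0 := by
  intro h
  apply ha
  have := congrArg Complex.im h
  simpa using this

lemma pair_norm_le {a b : ℂ} (ha : a.im ≠ 0) (hb : b.im ≠ 0) :
    ∃ C, 0 ≤ C ∧ ∀ t : ℝ, ‖((t:ℂ) - a)⁻¹ - ((t:ℂ) - b)⁻¹‖ ≤ C * (1 + t ^ 2)⁻¹ := by
  have hma : 0 < |a.im| := abs_pos.mpr ha
  have hmb : 0 < |b.im| := abs_pos.mpr hb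
  set Ka := 2 + (1 + 2 * |a.re| ^ 2) / |a.im| ^ 2 with hKadef
  set Kb := 2 + (1 + 2 * |b.re| ^ 2) / |b.im| ^ 2 with hKbdef
  have hKa : 0 ≤ Ka := by positivity
  have hKb : 0 ≤ Kb := by positivity
  refine ⟨‖a - b‖ * Real.sqrt (Ka * Kb), by positivity, fun t => ?_⟩
  have hna := key_normSq hma a le_rfl le_rfl t
  have hnb := key_normSq hmb b le_rfl le_rfl t
  have hid : ((t:ℂ) - a)⁻¹ - ((t:ℂ) - b)⁻¹ = (a - b) * (((t:ℂ) - a)⁻¹ * ((t:ℂ) - b)⁻¹) := by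
    field_simp [ofReal_sub_ne ha t, ofReal_sub_ne hb t]
    ring
  rw [hid, norm_mul, norm_mul]
  calc ‖a - b‖ * (‖((t:ℂ) - a)⁻¹‖ * ‖((t:ℂ) - b)⁻¹‖)
      ≤ ‖a - b‖ * (Real.sqrt (Ka * Kb) * (1 + t ^ 2)⁻¹) :=
        mul_le_mul_of_nonneg_left (inv_prod_norm_le hKa hKb a b t hna hnb) (norm_nonneg _)
    _ = ‖a - b‖ * Real.sqrt (Ka * Kb) * (1 + t ^ 2)⁻¹ := by ring

lemma inv_sq_norm_le {K : ℝ} (u : ℂ) (t : ℝ)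
    (h : 1 + t ^ 2 ≤ K * Complex.normSq ((t:ℂ) - u)) (hu : u.im ≠ 0) :
    ‖((t:ℂ) - u)⁻¹‖ ^ 2 ≤ K * (1 + t ^ 2)⁻¹ := by
  have ht : (0:ℝ) < 1 + t^2 := by positivity
  have hS : 0 < Complex.normSq ((t:ℂ) - u) := Complex.normSq_pos.mpr (ofReal_sub_ne hu t)
  have h1 : ‖((t:ℂ) - u)⁻¹‖ ^ 2 = (Complex.normSq ((t:ℂ) - u))⁻¹ := by
    rw [norm_inv, inv_pow, Complex.sq_norm]
  rw [h1, inv_eq_one_div, show K * (1+t^2)⁻¹ = K/(1+t^2) by ring,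
    div_le_div_iff₀ hS ht, one_mul]
  linarith

lemma ball_normSq_bound (u₀ : ℂ) (h : 0 < u₀.im) :
    ∃ K, 0 ≤ K ∧ ∀ u ∈ Metric.ball u₀ (u₀.im / 2), ∀ t : ℝ,
      1 + t ^ 2 ≤ K * Complex.normSq ((t:ℂ) - u) := by
  set m := u₀.im / 2 with hm
  have hm0 : 0 < m := by positivity
  set R := |u₀.re| + m with hR
  refine ⟨2 + (1 + 2 * R ^ 2) / m ^ 2, by positivity, fun u hu t => ?_⟩
  have hd : dist u u₀ < m := Metric.mem_ball.mp hu
  have him : |u.im - u₀.im| ≤ dist u u₀ := by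
    simpa [Complex.dist_eq, Complex.sub_im] using Complex.abs_im_le_norm (u - u₀)
  have hre : |u.re - u₀.re| ≤ dist u u₀ := by
    simpa [Complex.dist_eq, Complex.sub_re] using Complex.abs_re_le_norm (u - u₀)
  have h1 : m ≤ |u.im| := by
    have h2 := abs_le.mp (him.trans hd.le)
    have : m ≤ u.im := by simp only [hm] at *; linarith [h2.1]
    calc m ≤ u.im := this
    _ ≤ |u.im| := le_abs_self _
  have h2 : |u.re| ≤ R := by
    have h3 := abs_le.mp (hre.trans hd.le)
    rw [hR]
    cases abs_cases u.re with
    | inl hc => rw [hc.1]; cases abs_cases u₀.re with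
      | inl hc2 => linarith [h3.2, hc2.2]
      | inr hc2 => linarith [h3.2, hc2.2]
    | inr hc => rw [hc.1]; cases abs_cases u₀.re with
      | inl hc2 => linarith [h3.1, hc2.2]
      | inr hc2 => linarith [h3.1, hc2.2]
  exact key_normSq hm0 u h1 h2 t

lemma norm_half_mul (x : ℂ) : ‖(1 / (2 * Complex.I)) * x‖ ≤ ‖x‖ := by
  rw [norm_mul]
  have : ‖(1 / (2 * Complex.I) : ℂ)‖ = 1 / 2 := by
    simp [norm_div, Complex.norm_I]
  rw [this]
  nlinarith [norm_nonneg x]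

lemma Nfun_norm_le (e : ℤ) {z : ℂ} (hz : z.im ≠ 0) :
    ∃ C, 0 ≤ C ∧ ∀ t : ℝ, ‖Nfun e z t‖ ≤ C * (1 + t ^ 2)⁻¹ := by
  have hI : (Complex.I).im ≠ 0 := by simp
  have hnI : (-Complex.I).im ≠ 0 := by simp
  have hcz : ((starRingEnd ℂ) z).im ≠ 0 := by simpa using hz
  unfold Nfun
  split_ifs with h1 h2
  · obtain ⟨C, hC0, hC⟩ := pair_norm_le hz hI
    exact ⟨C, hC0, fun t => le_trans (norm_half_mul _) (hC t)⟩
  · obtain ⟨C, hC0, hC⟩ := pair_norm_le hI hnI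
    refine ⟨C, hC0, fun t => le_trans (norm_half_mul _) ?_⟩
    rw [show ((t:ℂ) + Complex.I) = (t:ℂ) - (-Complex.I) by ring]
    exact hC t
  · obtain ⟨C, hC0, hC⟩ := pair_norm_le hnI hcz
    refine ⟨C, hC0, fun t => le_trans (norm_half_mul _) ?_⟩
    rw [show ((t:ℂ) + Complex.I) = (t:ℂ) - (-Complex.I) by ring]
    exact hC t

lemma continuous_invt {a : ℂ} (ha : a.im ≠ 0) : Continuous fun t : ℝ => ((t:ℂ) - a)⁻¹ := by
  refine Continuous.inv₀ (by continuity) fun t => ofReal_sub_ne ha t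

lemma Nfun_continuous (e : ℤ) {z : ℂ} (hz : z.im ≠ 0) :
    Continuous (fun t : ℝ => Nfun e z t) := by
  have hI : (Complex.I).im ≠ 0 := by simp
  have hnI : (-Complex.I).im ≠ 0 := by simp
  have hcz : ((starRingEnd ℂ) z).im ≠ 0 := by simpa using hz
  have haddI : Continuous fun t : ℝ => ((t:ℂ) + Complex.I)⁻¹ := by
    have := continuous_invt hnI
    simpa [sub_neg_eq_add] using this
  unfold Nfun
  split_ifs with h1 h2
  · exact continuous_const.mul ((continuous_invt hz).sub (continuous_invt hI))
  · exact continuous_const.mul ((continuous_invt hI).sub haddI)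
  · exact continuous_const.mul (haddI.sub (continuous_invt hcz))

lemma Nfun_zero_eq (z z' : ℂ) (t : ℝ) : Nfun 0 z t = Nfun 0 z' t := by simp [Nfun]

lemma Nfun_neg_one_I (t : ℝ) : Nfun (-1) Complex.I t = 0 := by simp [Nfun]

lemma Nfun_one_I (t : ℝ) : Nfun 1 Complex.I t = 0 := by
  simp [Nfun, Complex.conj_I, sub_neg_eq_add]

lemma Nfun_one_eq_conj (z : ℂ) (t : ℝ) : Nfun 1 z t = (starRingEnd ℂ) (Nfun (-1) z t) := by
  rw [show Nfun 1 z t = (1/(2*Complex.I)) * (((t:ℂ)+Complex.I)⁻¹ - ((t:ℂ) - (starRingEnd ℂ) z)⁻¹)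
      from by simp [Nfun],
    show Nfun (-1) z t = (1/(2*Complex.I)) * (((t:ℂ)-z)⁻¹ - ((t:ℂ)-Complex.I)⁻¹)
      from by simp [Nfun]]
  simp only [map_mul, map_sub, map_inv₀, map_div₀, map_one, map_ofNat,
    Complex.conj_I, Complex.conj_ofReal]
  have hI : Complex.I ≠ 0 := Complex.I_ne_zero
  field_simp
  ring

section Meas
variable {n : ℕ} {μ : Measure (Fin n → ℝ)}

lemma growth_cont : Continuous fun t : Fin n → ℝ => ∏ ℓ, (1 + (t ℓ) ^ 2)⁻¹ := by
  refine continuous_finset_prod _ fun ℓ _ => Continuous.inv₀ ?_ fun t => by positivity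
  exact continuous_const.add ((continuous_apply ℓ).pow 2)

lemma growth_integrable (hμg : GrowthCondition n μ) :
    Integrable (fun t : Fin n → ℝ => ∏ ℓ, (1 + (t ℓ) ^ 2)⁻¹) μ := by
  refine ⟨growth_cont.aestronglyMeasurable, ?_⟩
  rw [HasFiniteIntegral]
  have : ∀ t : Fin n → ℝ, ‖∏ ℓ, (1 + (t ℓ) ^ 2)⁻¹‖ₑ
      = ENNReal.ofReal (∏ ℓ, (1 + (t ℓ) ^ 2)⁻¹) := by
    intro t
    rw [← Real.enorm_eq_ofReal (by positivity)]
  rw [lintegral_congr this]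
  exact hμg

lemma integrable_of_le_prod (hμg : GrowthCondition n μ) {g : (Fin n → ℝ) → ℂ}
    (hg : Continuous g) {D : ℝ}
    (hD : ∀ t, ‖g t‖ ≤ D * ∏ ℓ, (1 + (t ℓ) ^ 2)⁻¹) : Integrable g μ :=
  Integrable.mono' ((growth_integrable hμg).const_mul D) hg.aestronglyMeasurable
    (ae_of_all _ hD)

lemma prod_factor_bound (f : Fin n → ℝ → ℂ) (C : Fin n → ℝ) (hC : ∀ j, 0 ≤ C j)
    (hb : ∀ j s, ‖f j s‖ ≤ C j * (1 + s ^ 2)⁻¹) (t : Fin n → ℝ) :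
    ‖∏ j, f j (t j)‖ ≤ (∏ j, C j) * ∏ j, (1 + (t j) ^ 2)⁻¹ := by
  rw [norm_prod, ← Finset.prod_mul_distrib]
  exact Finset.prod_le_prod (fun j _ => norm_nonneg _) (fun j _ => hb j (t j))

end Meas

lemma ball_upper {u₀ : ℂ} (hu : 0 < u₀.im) {u : ℂ} (hmem : u ∈ Metric.ball u₀ (u₀.im / 2)) :
    0 < u.im := by
  have hd : dist u u₀ < u₀.im / 2 := Metric.mem_ball.mp hmem
  have him : |u.im - u₀.im| ≤ dist u u₀ := by
    simpa [Complex.dist_eq, Complex.sub_im] using Complex.abs_im_le_norm (u - u₀)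
  have := abs_le.mp (him.trans hd.le)
  linarith [this.1]

section Deriv
variable {n : ℕ} {μ : Measure (Fin n → ℝ)}

lemma hasDeriv_param (hμg : GrowthCondition n μ) (j : Fin n) {k : (Fin n → ℝ) → ℂ}
    (hk : Continuous k) {C : ℝ}
    (hCb : ∀ t, ‖k t‖ ≤ C * ∏ ℓ ∈ Finset.univ.erase j, (1 + (t ℓ) ^ 2)⁻¹)
    {u₀ : ℂ} (hu : 0 < u₀.im) :
    ∃ c, HasDerivAt (fun u : ℂ => ∫ t, Nfun (-1) u (t j) * k t ∂μ) c u₀ := by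
  obtain ⟨K, hK0, hK⟩ := ball_normSq_bound u₀ hu
  have hC : 0 ≤ C := by
    have := (norm_nonneg (k (fun _ => 0))).trans (hCb (fun _ => 0))
    have hp : (0:ℝ) < ∏ ℓ ∈ Finset.univ.erase j, ((1:ℝ) + ((0:ℝ)) ^ 2)⁻¹ := by
      refine Finset.prod_pos fun ℓ _ => by norm_num
    nlinarith
  set ε := u₀.im / 2 with hε
  have ε_pos : 0 < ε := by positivity
  set F' : ℂ → (Fin n → ℝ) → ℂ :=
    fun u t => (1 / (2 * Complex.I)) * ((((t j : ℂ) - u) ^ 2)⁻¹ * k t) with hF'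
  have prod_split : ∀ t : Fin n → ℝ,
      (1 + (t j) ^ 2)⁻¹ * ∏ ℓ ∈ Finset.univ.erase j, (1 + (t ℓ) ^ 2)⁻¹
        = ∏ ℓ, (1 + (t ℓ) ^ 2)⁻¹ := fun t =>
    Finset.mul_prod_erase Finset.univ (fun ℓ => (1 + (t ℓ) ^ 2)⁻¹) (Finset.mem_univ j)
  have key := hasDerivAt_integral_of_dominated_loc_of_deriv_le (μ := μ)
    (F := fun u t => Nfun (-1) u (t j) * k t) (F' := F')
    (bound := fun t => K * C * ∏ ℓ, (1 + (t ℓ) ^ 2)⁻¹) (x₀ := u₀) (Metric.ball_mem_nhds u₀ ε_pos)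
    ?meas ?int ?meas' ?bdd ?bint ?diff
  · exact ⟨_, key.2⟩
  case meas =>
    have hopen : {u : ℂ | 0 < u.im} ∈ 𝓝 u₀ :=
      (isOpen_lt continuous_const Complex.continuous_im).mem_nhds hu
    refine Filter.eventually_of_mem hopen fun u hui => ?_
    exact (((Nfun_continuous (-1) (ne_of_gt hui)).comp (continuous_apply j)).mul
      hk).aestronglyMeasurable
  case int =>
    obtain ⟨C1, hC10, hC1⟩ := Nfun_norm_le (-1) (ne_of_gt hu)
    refine integrable_of_le_prod hμg
      (((Nfun_continuous (-1) (ne_of_gt hu)).comp (continuous_apply j)).mul hk)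
      (D := C1 * C) fun t => ?_
    rw [norm_mul, ← prod_split t]
    calc ‖Nfun (-1) u₀ (t j)‖ * ‖k t‖
        ≤ (C1 * (1 + (t j) ^ 2)⁻¹) * (C * ∏ ℓ ∈ Finset.univ.erase j, (1 + (t ℓ) ^ 2)⁻¹) :=
          mul_le_mul (hC1 (t j)) (hCb t) (norm_nonneg _) (by positivity)
      _ = C1 * C * ((1 + (t j) ^ 2)⁻¹ * ∏ ℓ ∈ Finset.univ.erase j, (1 + (t ℓ) ^ 2)⁻¹) := by
          ring
  case meas' =>
    refine Continuous.aestronglyMeasurable ?_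
    refine continuous_const.mul (Continuous.mul ?_ hk)
    refine Continuous.inv₀ ?_ fun t => pow_ne_zero 2 (ofReal_sub_ne (ne_of_gt hu) (t j))
    exact ((Complex.continuous_ofReal.comp (continuous_apply j)).sub continuous_const).pow 2
  case bdd =>
    refine ae_of_all _ fun t u hmem => ?_
    have humem : 0 < u.im := ball_upper hu hmem
    have h1 : ‖(((t j : ℂ) - u) ^ 2)⁻¹‖ ≤ K * (1 + (t j) ^ 2)⁻¹ := by
      rw [← inv_pow, norm_pow]
      exact inv_sq_norm_le u (t j) (hK u hmem (t j)) (ne_of_gt humem)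
    calc ‖F' u t‖ ≤ ‖(((t j : ℂ) - u) ^ 2)⁻¹ * k t‖ := norm_half_mul _
      _ = ‖(((t j : ℂ) - u) ^ 2)⁻¹‖ * ‖k t‖ := norm_mul _ _
      _ ≤ (K * (1 + (t j) ^ 2)⁻¹) * (C * ∏ ℓ ∈ Finset.univ.erase j, (1 + (t ℓ) ^ 2)⁻¹) :=
          mul_le_mul h1 (hCb t) (norm_nonneg _) (by positivity)
      _ = K * C * ((1 + (t j) ^ 2)⁻¹ * ∏ ℓ ∈ Finset.univ.erase j, (1 + (t ℓ) ^ 2)⁻¹) := by ring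
      _ = K * C * ∏ ℓ, (1 + (t ℓ) ^ 2)⁻¹ := by rw [prod_split t]
  case bint => exact (growth_integrable hμg).const_mul (K * C)
  case diff =>
    refine ae_of_all _ fun t u hmem => ?_
    have humem : 0 < u.im := ball_upper hu hmem
    have hne : ((t j : ℂ)) - u ≠ 0 := ofReal_sub_ne (ne_of_gt humem) (t j)
    have h0 : HasDerivAt (fun u : ℂ => ((t j : ℂ) - u)) (-1) u := by
      simpa using (hasDerivAt_id u).const_sub ((t j : ℂ))
    have h1 := h0.fun_inv hne
    have h2 := ((h1.sub_const (((t j : ℂ) - Complex.I)⁻¹)).const_mul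
      (1 / (2 * Complex.I))).mul_const (k t)
    have heq : (fun u : ℂ => 1 / (2 * Complex.I) *
        (((t j : ℂ) - u)⁻¹ - ((t j : ℂ) - Complex.I)⁻¹) * k t)
        = fun u : ℂ => Nfun (-1) u (t j) * k t := by
      funext u; simp [Nfun]
    rw [heq] at h2
    refine h2.congr_deriv ?_
    rw [hF']
    field_simp
end Deriv

lemma deriv_eq_zero_of_conj {f g : ℂ → ℂ} {c d v : ℂ} (hf : HasDerivAt f c v)
    (hg : HasDerivAt g d v) (heq : f =ᶠ[𝓝 v] fun w => (starRingEnd ℂ) (g w)) : c = 0 := by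
  have h1 : HasFDerivAt f ((ContinuousLinearMap.smulRight (1 : ℂ →L[ℂ] ℂ) c).restrictScalars ℝ)
      v := hf.hasFDerivAt.restrictScalars ℝ
  have h2 : HasFDerivAt (fun w => (starRingEnd ℂ) (g w))
      ((Complex.conjCLE.toContinuousLinearMap).comp
        ((ContinuousLinearMap.smulRight (1 : ℂ →L[ℂ] ℂ) d).restrictScalars ℝ)) v := by
    exact (Complex.conjCLE.toContinuousLinearMap.hasFDerivAt).comp v
      (hg.hasFDerivAt.restrictScalars ℝ)
  have h3 := h2.congr_of_eventuallyEq heq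
  have h4 := h1.unique h3
  have e1 : c = (starRingEnd ℂ) d := by
    have := congrFun (congrArg DFunLike.coe h4) 1
    simpa using this
  have e2 : Complex.I * c = (starRingEnd ℂ) (Complex.I * d) := by
    have := congrFun (congrArg DFunLike.coe h4) Complex.I
    simpa [mul_comm] using this
  rw [map_mul, Complex.conj_I, ← e1] at e2
  have h5 : (2 * Complex.I) * c = 0 := by linear_combination e2
  have hI : (2 * Complex.I : ℂ) ≠ 0 := by simp [Complex.I_ne_zero]
  exact (mul_eq_zero.mp h5).resolve_left hI

lemma const_on_upper {f : ℂ → ℂ} {g : ℂ → ℂ}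
    (hderiv : ∀ u : ℂ, 0 < u.im → HasDerivAt f (g u) u)
    (hzero : ∀ u : ℂ, 0 < u.im → g u = 0) {u v : ℂ} (hu : 0 < u.im) (hv : 0 < v.im) :
    f u = f v := by
  set s : Set ℂ := {z : ℂ | 0 < z.im} with hs
  have hconv : Convex ℝ s := convex_halfSpace_im_gt 0
  have hf : ∀ x ∈ s, HasFDerivWithinAt f
      ((ContinuousLinearMap.smulRight (1 : ℂ →L[ℂ] ℂ) (g x)) : ℂ →L[ℂ] ℂ) s x :=
    fun x hx => ((hderiv x hx).hasFDerivAt).hasFDerivWithinAt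
  have hb : ∀ x ∈ s, ‖(ContinuousLinearMap.smulRight (1 : ℂ →L[ℂ] ℂ) (g x))‖ ≤ 0 := by
    intro x hx
    rw [hzero x hx]
    have : (ContinuousLinearMap.smulRight (1 : ℂ →L[ℂ] ℂ) (0:ℂ)) = 0 := by
      ext; simp
    rw [this, norm_zero]
  have := hconv.norm_image_sub_le_of_norm_hasFDerivWithin_le hf hb hv hu
  have h0 : ‖f u - f v‖ ≤ 0 := by simpa using this
  have := norm_le_zero_iff.mp h0
  exact sub_eq_zero.mp this

section Sep
variable {n : ℕ} {μ : Measure (Fin n → ℝ)}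

lemma prod_factor_bound_s (s : Finset (Fin n)) (f : Fin n → ℝ → ℂ) (C : Fin n → ℝ)
    (hb : ∀ j ∈ s, ∀ x : ℝ, ‖f j x‖ ≤ C j * (1 + x ^ 2)⁻¹) (t : Fin n → ℝ) :
    ‖∏ j ∈ s, f j (t j)‖ ≤ (∏ j ∈ s, C j) * ∏ j ∈ s, (1 + (t j) ^ 2)⁻¹ := by
  rw [norm_prod, ← Finset.prod_mul_distrib]
  exact Finset.prod_le_prod (fun j _ => norm_nonneg _) (fun j hj => hb j hj (t j))

/-- The mixed integral. -/
noncomputable def Tint (μ : Measure (Fin n → ℝ)) (v : Fin n → ℂ) (ρ : Fin n → Fin 3) : ℂ :=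
  ∫ t, ∏ j : Fin n, Nfun ((ρ j : ℤ) - 1) (v j) (t j) ∂μ

lemma sep (hμg : GrowthCondition n μ) (hμN : NevanlinnaCondition n μ) (D : Finset (Fin n)) :
    ∀ σ : Fin n → Fin 3, ∀ v : Fin n → ℂ, (∀ j, 0 < (v j).im) →
      ∑ ρ ∈ Finset.univ.filter (fun ρ : Fin n → Fin 3 =>
          ((∃ j, ρ j = 0) ∧ (∃ j, ρ j = 2)) ∧ ∀ j ∈ D, ρ j = σ j),
        Tint μ v ρ = 0 := by
  classical
  induction D using Finset.induction_on with
  | empty =>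
    intro σ v hv
    have he : (Finset.univ.filter (fun ρ : Fin n → Fin 3 =>
        ((∃ j, ρ j = 0) ∧ (∃ j, ρ j = 2)) ∧ ∀ j ∈ (∅ : Finset (Fin n)), ρ j = σ j))
        = Finset.univ.filter (fun ρ : Fin n → Fin 3 => (∃ j, ρ j = 0) ∧ (∃ j, ρ j = 2)) := by
      ext ρ; simp
    rw [he]
    exact hμN v hv
  | @insert j D hjD ih =>
    intro σ v hv
    -- the fibers by the value at j
    set A : Fin 3 → Finset (Fin n → Fin 3) := fun e =>
      Finset.univ.filter (fun ρ : Fin n → Fin 3 =>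
        ((∃ j', ρ j' = 0) ∧ (∃ j', ρ j' = 2)) ∧ (∀ ℓ ∈ D, ρ ℓ = σ ℓ) ∧ ρ j = e) with hA
    set k : (Fin n → Fin 3) → (Fin n → ℝ) → ℂ := fun ρ t =>
      ∏ ℓ ∈ Finset.univ.erase j, Nfun ((ρ ℓ : ℤ) - 1) (v ℓ) (t ℓ) with hk
    set S : Fin 3 → ℂ → ℂ := fun e u => ∑ ρ ∈ A e, Tint μ (Function.update v j u) ρ with hS
    have hkc : ∀ ρ : Fin n → Fin 3, Continuous (k ρ) := by
      intro ρ
      exact continuous_finset_prod _ fun ℓ _ =>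
        (Nfun_continuous _ (ne_of_gt (hv ℓ))).comp (continuous_apply ℓ)
    have hkb : ∀ ρ : Fin n → Fin 3, ∃ C : ℝ, ∀ t, ‖k ρ t‖
        ≤ C * ∏ ℓ ∈ Finset.univ.erase j, (1 + (t ℓ) ^ 2)⁻¹ := by
      intro ρ
      have hex : ∀ ℓ : Fin n, ∃ C, 0 ≤ C ∧ ∀ x : ℝ,
          ‖Nfun ((ρ ℓ : ℤ) - 1) (v ℓ) x‖ ≤ C * (1 + x ^ 2)⁻¹ :=
        fun ℓ => Nfun_norm_le _ (ne_of_gt (hv ℓ))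
      choose C hC0 hCb using hex
      exact ⟨∏ ℓ ∈ Finset.univ.erase j, C ℓ,
        prod_factor_bound_s _ _ C (fun ℓ _ x => hCb ℓ x)⟩
    -- rewriting Tint on the fibers
    have hprodsplit : ∀ (ρ : Fin n → Fin 3) (u : ℂ) (t : Fin n → ℝ),
        ∏ ℓ : Fin n, Nfun ((ρ ℓ : ℤ) - 1) (Function.update v j u ℓ) (t ℓ)
          = Nfun ((ρ j : ℤ) - 1) u (t j) * k ρ t := by
      intro ρ u t
      rw [← Finset.mul_prod_erase Finset.univ _ (Finset.mem_univ j), Function.update_self]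
      congr 1
      refine Finset.prod_congr rfl fun ℓ hℓ => ?_
      rw [Function.update_of_ne (Finset.ne_of_mem_erase hℓ)]
    have hT0 : ∀ ρ ∈ A 0, ∀ u : ℂ,
        Tint μ (Function.update v j u) ρ = ∫ t, Nfun (-1) u (t j) * k ρ t ∂μ := by
      intro ρ hρ u
      have hρj : ρ j = 0 := by
        simp only [hA, Finset.mem_filter] at hρ
        exact hρ.2.2.2
      unfold Tint
      refine congrArg _ (funext fun t => ?_)
      rw [hprodsplit ρ u t, hρj]
      norm_num
    have hT2 : ∀ ρ ∈ A 2, ∀ u : ℂ,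
        Tint μ (Function.update v j u) ρ = ∫ t, Nfun 1 u (t j) * k ρ t ∂μ := by
      intro ρ hρ u
      have hρj : ρ j = 2 := by
        simp only [hA, Finset.mem_filter] at hρ
        exact hρ.2.2.2
      unfold Tint
      refine congrArg _ (funext fun t => ?_)
      rw [hprodsplit ρ u t, hρj]
      norm_num
    -- the three fibers sum to zero
    have hpart : ∀ u : ℂ, 0 < u.im → S 0 u + S 1 u + S 2 u = 0 := by
      intro u hu
      have hvu : ∀ ℓ, 0 < ((Function.update v j u) ℓ).im := by
        intro ℓ
        rcases eq_or_ne ℓ j with h | h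
        · rw [h, Function.update_self]; exact hu
        · rw [Function.update_of_ne h]; exact hv ℓ
      have hih := ih σ (Function.update v j u) hvu
      set B := Finset.univ.filter (fun ρ : Fin n → Fin 3 =>
        ((∃ j', ρ j' = 0) ∧ (∃ j', ρ j' = 2)) ∧ ∀ ℓ ∈ D, ρ ℓ = σ ℓ) with hB
      have hfib := Finset.sum_fiberwise_of_maps_to (s := B) (g := fun ρ : Fin n → Fin 3 => ρ j)
        (t := (Finset.univ : Finset (Fin 3))) (fun ρ _ => Finset.mem_univ _)
        (fun ρ => Tint μ (Function.update v j u) ρ)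
      have hfilter : ∀ e : Fin 3, B.filter (fun ρ => ρ j = e) = A e := by
        intro e
        ext ρ
        simp only [hB, hA, Finset.mem_filter, Finset.mem_univ, true_and]
        tauto
      rw [← hfib] at hih
      rw [Fin.sum_univ_three] at hih
      rw [hfilter 0, hfilter 1, hfilter 2] at hih
      exact hih
    -- S 1 is constant
    have hS1const : ∀ u : ℂ, S 1 u = S 1 Complex.I := by
      intro u
      refine Finset.sum_congr rfl fun ρ hρ => ?_
      unfold Tint
      refine congrArg _ (funext fun t => ?_)
      refine Finset.prod_congr rfl fun ℓ _ => ?_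
      rcases eq_or_ne ℓ j with h | h
      · have hρj : ρ j = 1 := by
          simp only [hA, Finset.mem_filter] at hρ
          exact hρ.2.2.2
        have hcode : ((ρ ℓ : ℤ) - 1) = 0 := by rw [h, hρj]; norm_num
        rw [hcode]
        exact Nfun_zero_eq _ _ _
      · rw [Function.update_of_ne h, Function.update_of_ne h]
    -- values at I
    have hS0I : S 0 Complex.I = 0 := by
      refine Finset.sum_eq_zero fun ρ hρ => ?_
      rw [hT0 ρ hρ Complex.I]
      have : ∀ t : Fin n → ℝ, Nfun (-1) Complex.I (t j) * k ρ t = 0 := by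
        intro t; rw [Nfun_neg_one_I, zero_mul]
      simp only [this, integral_zero]
    have hS2I : S 2 Complex.I = 0 := by
      refine Finset.sum_eq_zero fun ρ hρ => ?_
      rw [hT2 ρ hρ Complex.I]
      have : ∀ t : Fin n → ℝ, Nfun 1 Complex.I (t j) * k ρ t = 0 := by
        intro t; rw [Nfun_one_I, zero_mul]
      simp only [this, integral_zero]
    -- derivative of the holomorphic fiber
    have hS0rep : (fun u : ℂ => S 0 u)
        = fun u : ℂ => ∑ ρ ∈ A 0, ∫ t, Nfun (-1) u (t j) * k ρ t ∂μ :=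
      funext fun u => Finset.sum_congr rfl fun ρ hρ => hT0 ρ hρ u
    have hd0 : ∀ u : ℂ, 0 < u.im → ∃ c, HasDerivAt (fun u : ℂ => S 0 u) c u := by
      intro u hu
      rw [hS0rep]
      have hex : ∀ ρ : Fin n → Fin 3,
          ∃ c, HasDerivAt (fun u : ℂ => ∫ t, Nfun (-1) u (t j) * k ρ t ∂μ) c u := by
        intro ρ
        obtain ⟨C, hCb⟩ := hkb ρ
        exact hasDeriv_param hμg j (hkc ρ) hCb hu
      choose c hc using hex
      exact ⟨_, HasDerivAt.fun_sum fun ρ _ => hc ρ⟩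
    -- the anti-holomorphic fiber as a conjugate
    set W : ℂ → ℂ := fun u => ∑ ρ ∈ A 2,
      ∫ t, Nfun (-1) u (t j) * (starRingEnd ℂ) (k ρ t) ∂μ with hW
    have hS2rep : ∀ u : ℂ, S 2 u = (starRingEnd ℂ) (W u) := by
      intro u
      rw [hW, map_sum]
      refine Finset.sum_congr rfl fun ρ hρ => ?_
      rw [hT2 ρ hρ u, ← integral_conj]
      refine congrArg _ (funext fun t => ?_)
      rw [map_mul, ← Nfun_one_eq_conj, Complex.conj_conj]
    have hdW : ∀ u : ℂ, 0 < u.im → ∃ c, HasDerivAt W c u := by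
      intro u hu
      rw [hW]
      have hex : ∀ ρ : Fin n → Fin 3,
          ∃ c, HasDerivAt
            (fun u : ℂ => ∫ t, Nfun (-1) u (t j) * (starRingEnd ℂ) (k ρ t) ∂μ) c u := by
        intro ρ
        obtain ⟨C, hCb⟩ := hkb ρ
        refine hasDeriv_param hμg j (Complex.continuous_conj.comp (hkc ρ)) (C := C) ?_ hu
        intro t
        simpa using hCb t
      choose c hc using hex
      exact ⟨_, HasDerivAt.fun_sum fun ρ _ => hc ρ⟩
    -- conclude that S 0 vanishes on the upper half-plane
    have hopen : IsOpen {u : ℂ | 0 < u.im} := isOpen_lt continuous_const Complex.continuous_im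
    have hglue : ∀ u ∈ {u : ℂ | 0 < u.im}, S 0 u
        = (starRingEnd ℂ) (-(starRingEnd ℂ) (S 1 Complex.I) - W u) := by
      intro u hu
      have h1 := hpart u hu
      have h2 := hS1const u
      have h3 := hS2rep u
      rw [map_sub, map_neg, Complex.conj_conj]
      rw [← h3]
      linear_combination h1 - h2
    have hS0zero : ∀ u : ℂ, 0 < u.im → S 0 u = 0 := by
      have hzero : ∀ u : ℂ, 0 < u.im →
          ∀ c, HasDerivAt (fun u : ℂ => S 0 u) c u → c = 0 := by
        intro u hu c hc
        obtain ⟨cw, hcw⟩ := hdW u hu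
        have hg : HasDerivAt (fun w : ℂ => -(starRingEnd ℂ) (S 1 Complex.I) - W w) (-cw) u :=
          hcw.const_sub _
        refine deriv_eq_zero_of_conj hc hg ?_
        exact Filter.eventually_of_mem (hopen.mem_nhds hu) hglue
      intro u hu
      set g0 : ℂ → ℂ := fun u => if h : 0 < u.im then Classical.choose (hd0 u h) else 0 with hg0
      have hderiv : ∀ u : ℂ, 0 < u.im → HasDerivAt (fun u : ℂ => S 0 u) (g0 u) u := by
        intro u hu
        rw [hg0]
        simp only [dif_pos hu]
        exact Classical.choose_spec (hd0 u hu)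
      have hz : ∀ u : ℂ, 0 < u.im → g0 u = 0 :=
        fun u hu => hzero u hu (g0 u) (hderiv u hu)
      have := const_on_upper hderiv hz hu (by simp : (0:ℝ) < (Complex.I).im)
      rw [this]
      exact hS0I
    -- conclude all three vanish
    have hS1zero : ∀ u : ℂ, 0 < u.im → S 1 u = 0 := by
      have hI : (0:ℝ) < (Complex.I).im := by simp
      have h := hpart Complex.I hI
      rw [hS0zero Complex.I hI, hS2I] at h
      intro u hu
      rw [hS1const u]
      linear_combination h
    have hS2zero : ∀ u : ℂ, 0 < u.im → S 2 u = 0 := by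
      intro u hu
      have h := hpart u hu
      rw [hS0zero u hu, hS1zero u hu] at h
      linear_combination h
    have hall : ∀ e : Fin 3, S e (v j) = 0 := by
      intro e
      fin_cases e
      · exact hS0zero (v j) (hv j)
      · exact hS1zero (v j) (hv j)
      · exact hS2zero (v j) (hv j)
    have hset : Finset.univ.filter (fun ρ : Fin n → Fin 3 =>
        ((∃ j', ρ j' = 0) ∧ (∃ j', ρ j' = 2)) ∧ ∀ ℓ ∈ insert j D, ρ ℓ = σ ℓ) = A (σ j) := by
      ext ρ
      simp only [hA, Finset.mem_filter, Finset.mem_univ, true_and, Finset.forall_mem_insert]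
      tauto
    have hupd : Function.update v j (v j) = v := Function.update_eq_self j v
    have hfinal := hall (σ j)
    simp only [hS] at hfinal
    rw [hupd] at hfinal
    rw [hset]
    exact hfinal

end Sep

noncomputable def Mker (z : ℂ) (t : ℝ) : ℂ :=
  (1 / (2 * Complex.I)) * (((t : ℂ) - z)⁻¹ - ((t : ℂ) + Complex.I)⁻¹)

lemma Mker_eq_add (z : ℂ) (t : ℝ) : Mker z t = Nfun (-1) z t + Nfun 0 z t := by
  simp only [Mker, Nfun]
  norm_num
  ring

lemma Mker_eq_neg (z : ℂ) (t : ℝ) : Mker z t = -Nfun 1 ((starRingEnd ℂ) z) t := by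
  simp only [Mker, Nfun]
  norm_num [Complex.conj_conj]
  ring

lemma Mker_norm_le {z : ℂ} (hz : z.im ≠ 0) :
    ∃ C, 0 ≤ C ∧ ∀ t : ℝ, ‖Mker z t‖ ≤ C * (1 + t ^ 2)⁻¹ := by
  have hnI : (-Complex.I).im ≠ 0 := by simp
  obtain ⟨C, hC0, hC⟩ := pair_norm_le hz hnI
  refine ⟨C, hC0, fun t => le_trans (norm_half_mul _) ?_⟩
  rw [show ((t:ℂ) + Complex.I) = (t:ℂ) - (-Complex.I) by ring]
  exact hC t

lemma Mker_continuous {z : ℂ} (hz : z.im ≠ 0) : Continuous fun t : ℝ => Mker z t := by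
  have hnI : (-Complex.I).im ≠ 0 := by simp
  have haddI : Continuous fun t : ℝ => ((t:ℂ) + Complex.I)⁻¹ := by
    simpa [sub_neg_eq_add] using continuous_invt hnI
  exact continuous_const.mul ((continuous_invt hz).sub haddI)

lemma Nfun00_norm_le : ∃ C, 0 ≤ C ∧ ∀ t : ℝ, ‖Nfun 0 0 t‖ ≤ C * (1 + t ^ 2)⁻¹ := by
  have hI : (Complex.I).im ≠ 0 := by simp
  exact Nfun_norm_le 0 hI |>.imp fun C hC =>
    ⟨hC.1, fun t => by rw [Nfun_zero_eq 0 Complex.I]; exact hC.2 t⟩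

lemma Nfun00_continuous : Continuous fun t : ℝ => Nfun 0 0 t := by
  have hI : (Complex.I).im ≠ 0 := by simp
  have := Nfun_continuous 0 hI
  simpa [funext fun t => Nfun_zero_eq 0 Complex.I t] using this

lemma kernelK_eq (n : ℕ) (z : Fin n → ℂ) (t : Fin n → ℝ) :
    kernelK n z t = 2 * Complex.I * ∏ j, Mker (z j) (t j)
      - Complex.I * ∏ j, Nfun 0 0 (t j) := by
  have h2I : (2 * Complex.I : ℂ) ≠ 0 := by simp [Complex.I_ne_zero]
  have h2In : ((2 * Complex.I : ℂ) ^ n) ≠ 0 := pow_ne_zero _ h2I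
  have h1 : ∀ (w : ℂ) (s : ℝ), (((s:ℂ) - w)⁻¹ - ((s:ℂ) + Complex.I)⁻¹)
      = 2 * Complex.I * Mker w s := by
    intro w s; unfold Mker; field_simp
  have h2 : ∀ s : ℝ, (((s:ℂ) - Complex.I)⁻¹ - ((s:ℂ) + Complex.I)⁻¹)
      = 2 * Complex.I * Nfun 0 0 s := by
    intro s
    simp only [Nfun]
    norm_num
    linear_combination (((s:ℂ) - Complex.I)⁻¹ - ((s:ℂ) + Complex.I)⁻¹) * Complex.I_mul_I
  have h3 : ∀ f : Fin n → ℂ, (∏ j, (2 * Complex.I * f j)) = (2*Complex.I)^n * ∏ j, f j := by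
    intro f
    rw [Finset.prod_mul_distrib, Finset.prod_const, Finset.card_univ, Fintype.card_fin]
  unfold kernelK
  rw [show (∏ ℓ : Fin n, (((t ℓ : ℂ) - z ℓ)⁻¹ - ((t ℓ : ℂ) + Complex.I)⁻¹))
      = ∏ j, (2 * Complex.I * Mker (z j) (t j)) from Finset.prod_congr rfl fun j _ => h1 _ _,
    show (∏ ℓ : Fin n, (((t ℓ : ℂ) - Complex.I)⁻¹ - ((t ℓ : ℂ) + Complex.I)⁻¹))
      = ∏ j, (2 * Complex.I * Nfun 0 0 (t j)) from Finset.prod_congr rfl fun j _ => h2 _,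
    h3, h3]
  field_simp

section Main
variable {n : ℕ} {μ : Measure (Fin n → ℝ)}

lemma main_calc (hμg : GrowthCondition n μ) (hμN : NevanlinnaCondition n μ)
    (x : Fin n → ℂ) (hx : ∀ j, (x j).im ≠ 0) (hL : ∃ j, (x j).im < 0) :
    ∫ t, kernelK n x t ∂μ
      = 2 * Complex.I * ((-1 : ℂ) ^ (Finset.univ.filter (fun j => (x j).im < 0)).card
          * ∫ t, ∏ j, (if (x j).im < 0 then Nfun 1 ((starRingEnd ℂ) (x j)) (t j)
              else Nfun 0 0 (t j)) ∂μ)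
        - Complex.I * ∫ t, ∏ j, Nfun 0 0 (t j) ∂μ := by
  classical
  set L := Finset.univ.filter (fun j => (x j).im < 0) with hLdef
  set vx : Fin n → ℂ := fun j => if (x j).im < 0 then (starRingEnd ℂ) (x j) else x j with hvx
  have hvxup : ∀ j, 0 < (vx j).im := by
    intro j
    rw [hvx]
    by_cases h : (x j).im < 0
    · simp only [if_pos h, Complex.conj_im]
      linarith
    · simp only [if_neg h]
      exact lt_of_le_of_ne (not_lt.mp h) (Ne.symm (hx j))
  set ff : Fin n → ℝ → ℂ := fun j s =>
    if (x j).im < 0 then 0 else Nfun (-1) (x j) s with hff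
  set gg : Fin n → ℝ → ℂ := fun j s =>
    if (x j).im < 0 then Nfun 1 ((starRingEnd ℂ) (x j)) s else Nfun 0 0 s with hgg
  -- bounds and continuity
  have hffb : ∀ j, ∃ C, 0 ≤ C ∧ ∀ s : ℝ, ‖ff j s‖ ≤ C * (1 + s ^ 2)⁻¹ := by
    intro j
    rw [hff]
    by_cases h : (x j).im < 0
    · exact ⟨0, le_rfl, fun s => by simp [if_pos h]⟩
    · simpa [if_neg h] using Nfun_norm_le (-1) (hx j)
  have hggb : ∀ j, ∃ C, 0 ≤ C ∧ ∀ s : ℝ, ‖gg j s‖ ≤ C * (1 + s ^ 2)⁻¹ := by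
    intro j
    rw [hgg]
    by_cases h : (x j).im < 0
    · have : ((starRingEnd ℂ) (x j)).im ≠ 0 := by simpa using hx j
      simpa [if_pos h] using Nfun_norm_le 1 this
    · simpa [if_neg h] using Nfun00_norm_le
  choose Cf hCf0 hCf using hffb
  choose Cg hCg0 hCg using hggb
  have hffc : ∀ j, Continuous (ff j) := by
    intro j
    rw [hff]
    by_cases h : (x j).im < 0
    · simp only [if_pos h]; exact continuous_const
    · simp only [if_neg h]; exact Nfun_continuous (-1) (hx j)
  have hggc : ∀ j, Continuous (gg j) := by
    intro j
    rw [hgg]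
    by_cases h : (x j).im < 0
    · have : ((starRingEnd ℂ) (x j)).im ≠ 0 := by simpa using hx j
      simp only [if_pos h]; exact Nfun_continuous 1 this
    · simp only [if_neg h]; exact Nfun00_continuous
  -- step 1 : pointwise factorization of the M-product
  have step1 : ∀ t : Fin n → ℝ, ∏ j, Mker (x j) (t j)
      = (-1 : ℂ) ^ L.card * ∏ j, (ff j (t j) + gg j (t j)) := by
    intro t
    have hfac : ∀ j : Fin n, Mker (x j) (t j)
        = (if (x j).im < 0 then (-1 : ℂ) else 1) * (ff j (t j) + gg j (t j)) := by
      intro j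
      by_cases h : (x j).im < 0
      · simp only [if_pos h, hff, hgg, zero_add]
        rw [Mker_eq_neg]
        ring
      · simp only [if_neg h, hff, hgg, one_mul]
        rw [Mker_eq_add, Nfun_zero_eq (x j) 0]
    rw [Finset.prod_congr rfl fun j _ => hfac j, Finset.prod_mul_distrib]
    congr 1
    rw [Finset.prod_ite, Finset.prod_const, Finset.prod_const, one_pow, mul_one, hLdef]
  -- step 3 : integrability of each expanded summand
  have hint : ∀ E : Finset (Fin n), Integrable
      (fun t : Fin n → ℝ => (∏ j ∈ E, ff j (t j)) * ∏ j ∈ Finset.univ \ E, gg j (t j)) μ := by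
    intro E
    have hcont : Continuous
        (fun t : Fin n → ℝ => (∏ j ∈ E, ff j (t j)) * ∏ j ∈ Finset.univ \ E, gg j (t j)) := by
      refine Continuous.mul ?_ ?_
      · exact continuous_finset_prod _ fun j _ => (hffc j).comp (continuous_apply j)
      · exact continuous_finset_prod _ fun j _ => (hggc j).comp (continuous_apply j)
    refine integrable_of_le_prod hμg hcont
      (D := (∏ j ∈ E, Cf j) * ∏ j ∈ Finset.univ \ E, Cg j) fun t => ?_
    rw [norm_mul]
    have h1 := prod_factor_bound_s E ff Cf (fun j _ s => hCf j s) t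
    have h2 := prod_factor_bound_s (Finset.univ \ E) gg Cg (fun j _ s => hCg j s) t
    calc ‖∏ j ∈ E, ff j (t j)‖ * ‖∏ j ∈ Finset.univ \ E, gg j (t j)‖
        ≤ ((∏ j ∈ E, Cf j) * ∏ j ∈ E, (1 + (t j) ^ 2)⁻¹)
          * ((∏ j ∈ Finset.univ \ E, Cg j) * ∏ j ∈ Finset.univ \ E, (1 + (t j) ^ 2)⁻¹) :=
          mul_le_mul h1 h2 (norm_nonneg _)
            (mul_nonneg (Finset.prod_nonneg fun j _ => hCf0 j) (by positivity))
      _ = ((∏ j ∈ E, Cf j) * ∏ j ∈ Finset.univ \ E, Cg j)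
          * ((∏ j ∈ Finset.univ \ E, (1 + (t j) ^ 2)⁻¹) * ∏ j ∈ E, (1 + (t j) ^ 2)⁻¹) := by
          ring
      _ = ((∏ j ∈ E, Cf j) * ∏ j ∈ Finset.univ \ E, Cg j) * ∏ j, (1 + (t j) ^ 2)⁻¹ := by
          rw [Finset.prod_sdiff (Finset.subset_univ E)]
  -- step 4 : expand and swap sum and integral
  have hswap : ∫ t, ∏ j, (ff j (t j) + gg j (t j)) ∂μ
      = ∑ E ∈ Finset.univ.powerset,
          ∫ t, (∏ j ∈ E, ff j (t j)) * ∏ j ∈ Finset.univ \ E, gg j (t j) ∂μ := by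
    rw [show (fun t : Fin n → ℝ => ∏ j, (ff j (t j) + gg j (t j)))
        = fun t => ∑ E ∈ Finset.univ.powerset,
            (∏ j ∈ E, ff j (t j)) * ∏ j ∈ Finset.univ \ E, gg j (t j) from
      funext fun t => Finset.prod_add _ _ _]
    exact integral_finset_sum _ fun E _ => hint E
  -- step 5 : all nonempty subsets contribute zero
  have hzero : ∀ E ∈ Finset.univ.powerset, E ≠ (∅ : Finset (Fin n)) →
      ∫ t, (∏ j ∈ E, ff j (t j)) * ∏ j ∈ Finset.univ \ E, gg j (t j) ∂μ = 0 := by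
    intro E _ hne
    by_cases hcap : ∃ j ∈ E, (x j).im < 0
    · obtain ⟨j0, hj0E, hj0⟩ := hcap
      have hzf : (fun t : Fin n → ℝ =>
          (∏ j ∈ E, ff j (t j)) * ∏ j ∈ Finset.univ \ E, gg j (t j)) = fun _ => 0 := by
        funext t
        rw [Finset.prod_eq_zero hj0E (by simp [hff, if_pos hj0]), zero_mul]
      rw [hzf, integral_zero]
    · push_neg at hcap
      obtain ⟨j0, hj0E⟩ := Finset.nonempty_of_ne_empty hne
      set ρE : Fin n → Fin 3 := fun j =>
        if (x j).im < 0 then 2 else if j ∈ E then 0 else 1 with hρE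
      have hTeq : ∫ t, (∏ j ∈ E, ff j (t j)) * ∏ j ∈ Finset.univ \ E, gg j (t j) ∂μ
          = Tint μ vx ρE := by
        unfold Tint
        refine congrArg _ (funext fun t => ?_)
        rw [← Finset.prod_sdiff (Finset.subset_univ E), mul_comm]
        congr 1
        · refine Finset.prod_congr rfl fun j hj => ?_
          have hjE : j ∉ E := (Finset.mem_sdiff.mp hj).2
          by_cases h : (x j).im < 0
          · have : ρE j = 2 := by rw [hρE]; simp [if_pos h]
            rw [this, hgg, hvx]
            simp only [if_pos h]
            norm_num
          · have : ρE j = 1 := by rw [hρE]; simp [if_neg h, if_neg hjE]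
            rw [this, hgg, hvx]
            simp only [if_neg h]
            norm_num [Nfun_zero_eq]
            exact Nfun_zero_eq 0 (x j) _
        · refine Finset.prod_congr rfl fun j hj => ?_
          have h : ¬ (x j).im < 0 := not_lt.mpr (hcap j hj)
          have : ρE j = 0 := by rw [hρE]; simp [if_neg h, if_pos hj]
          rw [this, hff, hvx]
          simp only [if_neg h]
          norm_num
      rw [hTeq]
      -- use the separation lemma
      have hsep := sep hμg hμN Finset.univ ρE vx hvxup
      have hsingle : Finset.univ.filter (fun ρ : Fin n → Fin 3 =>
          ((∃ j', ρ j' = 0) ∧ (∃ j', ρ j' = 2)) ∧ ∀ j ∈ Finset.univ, ρ j = ρE j) = {ρE} := by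
        ext ρ
        constructor
        · intro hmem
          rw [Finset.mem_filter] at hmem
          exact Finset.mem_singleton.mpr (funext fun j => hmem.2.2 j (Finset.mem_univ j))
        · intro hmem
          rw [Finset.mem_singleton] at hmem
          subst hmem
          rw [Finset.mem_filter]
          refine ⟨Finset.mem_univ _, ⟨⟨j0, ?_⟩, ?_⟩, fun j _ => rfl⟩
          · rw [hρE]; simp [if_neg (not_lt.mpr (hcap j0 hj0E)), if_pos hj0E]
          · obtain ⟨j1, hj1⟩ := hL
            exact ⟨j1, by rw [hρE]; simp [if_pos hj1]⟩
      rw [hsingle, Finset.sum_singleton] at hsep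
      exact hsep
  -- step 6 : single surviving term
  have hsum : ∑ E ∈ Finset.univ.powerset,
      ∫ t, (∏ j ∈ E, ff j (t j)) * ∏ j ∈ Finset.univ \ E, gg j (t j) ∂μ
      = ∫ t, ∏ j, gg j (t j) ∂μ := by
    rw [Finset.sum_eq_single_of_mem (∅ : Finset (Fin n))
      (Finset.empty_mem_powerset _) hzero]
    simp
  -- assembly
  have hMint : ∫ t, ∏ j, Mker (x j) (t j) ∂μ
      = (-1 : ℂ) ^ L.card * ∫ t, ∏ j, gg j (t j) ∂μ := by
    calc ∫ t, ∏ j, Mker (x j) (t j) ∂μ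
        = ∫ t, (-1 : ℂ) ^ L.card * ∏ j, (ff j (t j) + gg j (t j)) ∂μ :=
          congrArg _ (funext step1)
      _ = (-1 : ℂ) ^ L.card * ∫ t, ∏ j, (ff j (t j) + gg j (t j)) ∂μ :=
          integral_const_mul _ _
      _ = (-1 : ℂ) ^ L.card * ∫ t, ∏ j, gg j (t j) ∂μ := by rw [hswap, hsum]
  have hint2 : Integrable (fun t : Fin n → ℝ => ∏ j, Mker (x j) (t j)) μ := by
    choose CM hCM0 hCM using fun j => Mker_norm_le (hx j)
    exact integrable_of_le_prod hμg
      (continuous_finset_prod _ fun j _ => (Mker_continuous (hx j)).comp (continuous_apply j))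
      (D := ∏ j, CM j)
      fun t => prod_factor_bound_s Finset.univ _ CM (fun j _ s => hCM j s) t
  have hint3 : Integrable (fun t : Fin n → ℝ => ∏ j, Nfun 0 0 (t j)) μ := by
    obtain ⟨C0, hC00, hC0b⟩ := Nfun00_norm_le
    exact integrable_of_le_prod hμg
      (continuous_finset_prod _ fun j _ => Nfun00_continuous.comp (continuous_apply j))
      (D := ∏ _j : Fin n, C0)
      fun t => prod_factor_bound_s Finset.univ _ (fun _ => C0) (fun j _ s => hC0b s) t
  have hker : (fun t : Fin n → ℝ => kernelK n x t)
      = fun t => 2 * Complex.I * ∏ j, Mker (x j) (t j)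
        - Complex.I * ∏ j, Nfun 0 0 (t j) := funext (kernelK_eq n x)
  rw [hker, integral_sub (hint2.const_mul _) (hint3.const_mul _),
    integral_const_mul, integral_const_mul, hMint]

end Main


/-- Proposition 2.5: for `n ≥ 2`, the symmetric extension of a Herglotz-Nevanlinna function
with `b = 0` satisfies the variable non-dependence property. -/
theorem symmetric_extension_var_nondep
    (n : ℕ) (hn : 2 ≤ n) (a : ℝ) (μ : Measure (Fin n → ℝ))
    (hμg : GrowthCondition n μ) (hμN : NevanlinnaCondition n μ) :
    VarNonDep n (fun z => (a : ℂ) + (1 / (Real.pi : ℂ) ^ n) * ∫ t, kernelK n z t ∂μ) := by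
  intro z hz w hw hex hiff heq
  have hLw : ∃ j, (w j).im < 0 := hex.imp fun j h => (hiff j).mp h
  have h1 := main_calc hμg hμN z hz hex
  have h2 := main_calc hμg hμN w hw hLw
  suffices h : ∫ t, kernelK n z t ∂μ = ∫ t, kernelK n w t ∂μ by
    simp only []
    rw [h]
  rw [h1, h2]
  have hLeq : Finset.univ.filter (fun j => (z j).im < 0)
      = Finset.univ.filter (fun j => (w j).im < 0) := by
    ext j; simp [hiff j]
  have hgeq : (fun t : Fin n → ℝ => ∏ j, (if (z j).im < 0
        then Nfun 1 ((starRingEnd ℂ) (z j)) (t j) else Nfun 0 0 (t j)))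
      = fun t => ∏ j, (if (w j).im < 0
        then Nfun 1 ((starRingEnd ℂ) (w j)) (t j) else Nfun 0 0 (t j)) := by
    funext t
    refine Finset.prod_congr rfl fun j _ => ?_
    by_cases hj : (z j).im < 0
    · rw [if_pos hj, if_pos ((hiff j).mp hj), heq j hj]
    · rw [if_neg hj, if_neg (fun hc => hj ((hiff j).mpr hc))]
  rw [hLeq, hgeq]
end

section
/- Let n ∈ ℕ, let μ be a positive Borel measure on ℝ^n satisfying the growth condition, and let g : (ℂ∖ℝ)^n → ℂ be the Cauchy-type function given by μ. Then for every index j ∈ {1,…,n}, every angle θ ∈ (0, π/2], and every fixed choice of the components z_k ∈ ℂ∖ℝ for k ≠ j, one has g(z)/z_j → 0 as |z_j| → ∞ within the upper Stoltz domain of angle θ, and also g(z)/z_j → 0 as |z_j| → ∞ within the lower Stoltz domain of angle θ. -/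
open Complex MeasureTheory Finset Filter Topology

noncomputable def Complex.abs : AbsoluteValue ℂ ℝ :=
  IsAbsoluteValue.toAbsoluteValue (norm : ℂ → ℝ)

lemma Complex.norm_eq_abs (z : ℂ) : ‖z‖ = Complex.abs z := rfl

lemma Complex.abs_im_le_abs (z : ℂ) : |z.im| ≤ Complex.abs z := Complex.abs_im_le_norm z

@[simp] lemma Complex.abs_ofReal (r : ℝ) : Complex.abs (r : ℂ) = |r| := Complex.norm_real r

@[simp] lemma Complex.abs_I : Complex.abs Complex.I = 1 := Complex.norm_I

@[simp] lemma Complex.abs_two : Complex.abs 2 = 2 := by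
  rw [← Complex.norm_eq_abs]; simp

@[simp] lemma Complex.abs_conj (z : ℂ) : Complex.abs ((starRingEnd ℂ) z) = Complex.abs z :=
  Complex.norm_conj z

lemma Complex.abs_add_mul_I (x y : ℝ) :
    Complex.abs (x + y * Complex.I) = Real.sqrt (x ^ 2 + y ^ 2) := by
  rw [← Complex.norm_eq_abs]; exact Complex.norm_add_mul_I x y

lemma sub_lower (s : ℝ) (ζ : ℂ) (t : ℝ) (hs0 : 0 < s) (hs1 : s ≤ 1)
    (h : s * max 1 (Complex.abs ζ) ≤ |ζ.im|) :
    s / 4 * Real.sqrt (1 + t ^ 2) ≤ Complex.abs ((t : ℂ) - ζ) := by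
  set M := max 1 (Complex.abs ζ) with hM
  have hM1 : 1 ≤ M := le_max_left _ _
  have hMζ : Complex.abs ζ ≤ M := le_max_right _ _
  have hsqrt : Real.sqrt (1 + t ^ 2) ≤ 1 + |t| := by
    have h1 : (1:ℝ) + t ^ 2 ≤ (1 + |t|) ^ 2 := by nlinarith [abs_nonneg t, _root_.sq_abs t]
    calc Real.sqrt (1 + t ^ 2) ≤ Real.sqrt ((1 + |t|) ^ 2) := Real.sqrt_le_sqrt h1
      _ = 1 + |t| := Real.sqrt_sq (by positivity)
  have him : |ζ.im| ≤ Complex.abs ((t : ℂ) - ζ) := by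
    have := Complex.abs_im_le_abs ((t : ℂ) - ζ)
    simpa using this
  have habs : |t| - Complex.abs ζ ≤ Complex.abs ((t : ℂ) - ζ) := by
    have h2 : ‖(t:ℂ)‖ - ‖ζ‖ ≤ ‖(t:ℂ) - ζ‖ := norm_sub_norm_le _ _
    simpa [Complex.norm_eq_abs, Complex.norm_real, Real.norm_eq_abs] using h2
  rcases le_or_gt |t| (2 * M) with hc | hc
  · calc s / 4 * Real.sqrt (1 + t ^ 2) ≤ s / 4 * (1 + |t|) := by gcongr
      _ ≤ s * M := by nlinarith
      _ ≤ |ζ.im| := h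
      _ ≤ _ := him
  · calc s / 4 * Real.sqrt (1 + t ^ 2) ≤ s / 4 * (1 + |t|) := by gcongr
      _ ≤ |t| - M := by nlinarith
      _ ≤ |t| - Complex.abs ζ := by linarith
      _ ≤ _ := habs

lemma factor_bound (s : ℝ) (ζ : ℂ) (t : ℝ) (hs0 : 0 < s) (hs1 : s ≤ 1)
    (h : s * max 1 (Complex.abs ζ) ≤ |ζ.im|) :
    Complex.abs (((t : ℂ) - ζ)⁻¹ - ((t : ℂ) + Complex.I)⁻¹) ≤
      4 / s * (Complex.abs ζ + 1) * (1 + t ^ 2)⁻¹ := by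
  have him : ζ.im ≠ 0 := by
    have h1 : 0 < |ζ.im| := lt_of_lt_of_le (by nlinarith [le_max_left 1 (Complex.abs ζ)]) h
    exact abs_pos.mp h1
  have h1 : ((t : ℂ) - ζ) ≠ 0 := by
    intro hh
    exact him (by rw [← sub_eq_zero.mp hh]; simp)
  have h2 : ((t : ℂ) + Complex.I) ≠ 0 := by
    intro hh
    have := congrArg Complex.im hh
    simp at this
  have key : ((t : ℂ) - ζ)⁻¹ - ((t : ℂ) + Complex.I)⁻¹ =
      (ζ + Complex.I) / (((t : ℂ) - ζ) * ((t : ℂ) + Complex.I)) := by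
    field_simp
    ring
  have e2 : Complex.abs ((t : ℂ) + Complex.I) = Real.sqrt (1 + t ^ 2) := by
    have : ((t : ℂ) + Complex.I) = (t : ℝ) + (1 : ℝ) * Complex.I := by push_cast; ring
    rw [this, Complex.abs_add_mul_I]
    ring_nf
  have e1 := sub_lower s ζ t hs0 hs1 h
  have hsq : 0 < Real.sqrt (1 + t ^ 2) := Real.sqrt_pos.mpr (by positivity)
  have hnum : Complex.abs (ζ + Complex.I) ≤ Complex.abs ζ + 1 := by
    calc Complex.abs (ζ + Complex.I) ≤ Complex.abs ζ + Complex.abs Complex.I :=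
        Complex.abs.add_le _ _
      _ = Complex.abs ζ + 1 := by rw [Complex.abs_I]
  rw [key, map_div₀, map_mul, e2]
  have hden : s / 4 * Real.sqrt (1 + t ^ 2) * Real.sqrt (1 + t ^ 2) ≤
      Complex.abs ((t : ℂ) - ζ) * Real.sqrt (1 + t ^ 2) := by
    exact mul_le_mul_of_nonneg_right e1 hsq.le
  have hdpos : 0 < s / 4 * Real.sqrt (1 + t ^ 2) * Real.sqrt (1 + t ^ 2) := by positivity
  calc Complex.abs (ζ + Complex.I) / (Complex.abs ((t : ℂ) - ζ) * Real.sqrt (1 + t ^ 2)) ≤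
      (Complex.abs ζ + 1) / (s / 4 * Real.sqrt (1 + t ^ 2) * Real.sqrt (1 + t ^ 2)) := by
        apply div_le_div₀ (by positivity) hnum hdpos hden
    _ = 4 / s * (Complex.abs ζ + 1) * (1 + t ^ 2)⁻¹ := by
        rw [mul_assoc, Real.mul_self_sqrt (by positivity : (0:ℝ) ≤ 1 + t ^ 2)]
        field_simp

lemma kernel_bound (n : ℕ) (ζ : Fin n → ℂ) (s : Fin n → ℝ)
    (hs0 : ∀ ℓ, 0 < s ℓ) (hs1 : ∀ ℓ, s ℓ ≤ 1)
    (hζ : ∀ ℓ, s ℓ * max 1 (Complex.abs (ζ ℓ)) ≤ |(ζ ℓ).im|) (t : Fin n → ℝ) :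
    Complex.abs (kernelK n ζ t) ≤
      (2 / 2 ^ n * ∏ ℓ, (4 / s ℓ * (Complex.abs (ζ ℓ) + 1)) + 4 ^ n) *
        ∏ ℓ, (1 + (t ℓ) ^ 2)⁻¹ := by
  have hQℓ : ∀ ℓ, (0:ℝ) ≤ (1 + (t ℓ) ^ 2)⁻¹ := fun ℓ => by positivity
  have habs2I : Complex.abs (2 * Complex.I) = 2 := by
    simp [map_mul, Complex.abs_I, Complex.abs_two]
  have hIbound : ∀ ℓ : Fin n,
      Complex.abs (((t ℓ : ℂ) - Complex.I)⁻¹ - ((t ℓ : ℂ) + Complex.I)⁻¹) ≤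
        8 * (1 + (t ℓ) ^ 2)⁻¹ := by
    intro ℓ
    have h := factor_bound 1 Complex.I (t ℓ) one_pos le_rfl
      (by simp [Complex.abs_I, Complex.I_im])
    rw [Complex.abs_I] at h
    norm_num at h
    exact h
  have hX : Complex.abs ((2 / (2 * Complex.I) ^ n) *
      ∏ ℓ : Fin n, (((t ℓ : ℂ) - ζ ℓ)⁻¹ - ((t ℓ : ℂ) + Complex.I)⁻¹)) ≤
      (2 / 2 ^ n * ∏ ℓ, (4 / s ℓ * (Complex.abs (ζ ℓ) + 1))) * ∏ ℓ, (1 + (t ℓ) ^ 2)⁻¹ := by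
    rw [map_mul, map_div₀, map_pow, habs2I, Complex.abs_two, map_prod]
    rw [mul_assoc, ← Finset.prod_mul_distrib]
    apply mul_le_mul_of_nonneg_left _ (by positivity)
    exact Finset.prod_le_prod (fun ℓ _ => Complex.abs.nonneg _)
      (fun ℓ _ => factor_bound (s ℓ) (ζ ℓ) (t ℓ) (hs0 ℓ) (hs1 ℓ) (hζ ℓ))
  have hY : Complex.abs ((1 / (2 * Complex.I) ^ n) *
      ∏ ℓ : Fin n, (((t ℓ : ℂ) - Complex.I)⁻¹ - ((t ℓ : ℂ) + Complex.I)⁻¹)) ≤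
      4 ^ n * ∏ ℓ, (1 + (t ℓ) ^ 2)⁻¹ := by
    rw [map_mul, map_div₀, map_pow, habs2I, map_one, map_prod]
    have : ∏ ℓ : Fin n, Complex.abs (((t ℓ : ℂ) - Complex.I)⁻¹ - ((t ℓ : ℂ) + Complex.I)⁻¹)
        ≤ ∏ ℓ : Fin n, (8 * (1 + (t ℓ) ^ 2)⁻¹) :=
      Finset.prod_le_prod (fun ℓ _ => Complex.abs.nonneg _) (fun ℓ _ => hIbound ℓ)
    calc (1 : ℝ) / 2 ^ n * ∏ ℓ : Fin n,
          Complex.abs (((t ℓ : ℂ) - Complex.I)⁻¹ - ((t ℓ : ℂ) + Complex.I)⁻¹)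
        ≤ 1 / 2 ^ n * ∏ ℓ : Fin n, (8 * (1 + (t ℓ) ^ 2)⁻¹) := by
          apply mul_le_mul_of_nonneg_left this (by positivity)
      _ = 4 ^ n * ∏ ℓ, (1 + (t ℓ) ^ 2)⁻¹ := by
          rw [Finset.prod_mul_distrib, Finset.prod_const, Finset.card_univ, Fintype.card_fin]
          rw [← mul_assoc]
          congr 1
          rw [div_mul_eq_mul_div, one_mul, ← div_pow]
          norm_num
  calc Complex.abs (kernelK n ζ t) ≤
      Complex.abs ((2 / (2 * Complex.I) ^ n) *
        ∏ ℓ : Fin n, (((t ℓ : ℂ) - ζ ℓ)⁻¹ - ((t ℓ : ℂ) + Complex.I)⁻¹)) +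
      Complex.abs ((1 / (2 * Complex.I) ^ n) *
        ∏ ℓ : Fin n, (((t ℓ : ℂ) - Complex.I)⁻¹ - ((t ℓ : ℂ) + Complex.I)⁻¹)) := by
        unfold kernelK
        rw [map_mul, Complex.abs_I, one_mul]
        simpa [Complex.norm_eq_abs] using norm_sub_le
          ((2 / (2 * Complex.I) ^ n) *
            ∏ ℓ : Fin n, (((t ℓ : ℂ) - ζ ℓ)⁻¹ - ((t ℓ : ℂ) + Complex.I)⁻¹))
          ((1 / (2 * Complex.I) ^ n) *
            ∏ ℓ : Fin n, (((t ℓ : ℂ) - Complex.I)⁻¹ - ((t ℓ : ℂ) + Complex.I)⁻¹))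
    _ ≤ _ := by
        rw [add_mul]
        exact add_le_add hX hY

lemma kernelK_measurable (n : ℕ) (ζ : Fin n → ℂ) :
    Measurable (fun t : Fin n → ℝ => kernelK n ζ t) := by
  unfold kernelK
  apply Measurable.const_mul
  apply Measurable.sub
  · apply Measurable.const_mul
    apply Finset.measurable_prod
    intro ℓ _
    apply Measurable.sub
    · exact ((Complex.measurable_ofReal.comp (measurable_pi_apply ℓ)).sub measurable_const).inv
    · exact ((Complex.measurable_ofReal.comp (measurable_pi_apply ℓ)).add measurable_const).inv
  · apply Measurable.const_mul
    apply Finset.measurable_prod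
    intro ℓ _
    apply Measurable.sub
    · exact ((Complex.measurable_ofReal.comp (measurable_pi_apply ℓ)).sub measurable_const).inv
    · exact ((Complex.measurable_ofReal.comp (measurable_pi_apply ℓ)).add measurable_const).inv

lemma Q_integrable (n : ℕ) (μ : Measure (Fin n → ℝ))
    (hμ : ∫⁻ t, ENNReal.ofReal (∏ ℓ : Fin n, (1 + (t ℓ) ^ 2)⁻¹) ∂μ < ⊤) (C : ℝ) :
    Integrable (fun t : Fin n → ℝ => C * ∏ ℓ, (1 + (t ℓ) ^ 2)⁻¹) μ := by
  apply Integrable.const_mul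
  have hmeas : Measurable (fun t : Fin n → ℝ => ∏ ℓ, (1 + (t ℓ) ^ 2)⁻¹) := by
    apply Finset.measurable_prod
    intro ℓ _
    exact (measurable_const.add ((measurable_pi_apply ℓ).pow measurable_const)).inv
  refine ⟨hmeas.aestronglyMeasurable, ?_⟩
  rw [hasFiniteIntegral_iff_ofReal (ae_of_all μ (fun t => by positivity))]
  exact hμ

lemma mul_bound_aux (A q B a : ℝ) (hA : 0 ≤ A) (hq : 0 ≤ q) (hB : 0 < B) (ha : 1 ≤ a) :
    (A * (a + 1) + B) * q ≤ (2 * A + B) * q * a := by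
  have h1 : A * (a + 1) + B ≤ (2 * A + B) * a := by nlinarith
  calc (A * (a + 1) + B) * q ≤ ((2 * A + B) * a) * q := mul_le_mul_of_nonneg_right h1 hq
    _ = (2 * A + B) * q * a := by ring

lemma aux_tendsto
    (n : ℕ) (μ : Measure (Fin n → ℝ)) (hμ : GrowthCondition n μ)
    (g : (Fin n → ℂ) → ℂ)
    (hg : ∀ z ∈ polyCutPlane n,
      g z = (1 / (Real.pi : ℂ) ^ n) * ∫ t, kernelK n z t ∂μ)
    (j : Fin n) (θ : ℝ) (hθ1 : 0 < θ) (hθ2 : θ ≤ Real.pi / 2)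
    (z : Fin n → ℂ) (hz : ∀ k, k ≠ j → (z k).im ≠ 0)
    (l : Filter ℂ) [l.IsCountablyGenerated]
    (hl1 : Tendsto Complex.abs l atTop)
    (hl2 : ∀ᶠ w in l, Real.sin θ * Complex.abs w ≤ |w.im|) :
    Tendsto (fun w : ℂ => g (Function.update z j w) / w) l (𝓝 0) := by
  have hsθ0 : 0 < Real.sin θ :=
    Real.sin_pos_of_pos_of_lt_pi hθ1 (lt_of_le_of_lt hθ2 (by linarith [Real.pi_pos]))
  have hsθ1 : Real.sin θ ≤ 1 := Real.sin_le_one θ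
  set sθ := Real.sin θ with hsθdef
  set s₀ : Fin n → ℝ := fun k => min |(z k).im| 1 / max 1 (Complex.abs (z k)) with hs₀def
  have hs₀pos : ∀ k, k ≠ j → 0 < s₀ k := by
    intro k hk
    have h1 : 0 < |(z k).im| := abs_pos.mpr (hz k hk)
    have h2 : (0:ℝ) < max 1 (Complex.abs (z k)) := lt_of_lt_of_le one_pos (le_max_left _ _)
    exact div_pos (lt_min h1 one_pos) h2
  have hs₀le : ∀ k, s₀ k ≤ 1 := by
    intro k
    have h2 : (0:ℝ) < max 1 (Complex.abs (z k)) := lt_of_lt_of_le one_pos (le_max_left _ _)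
    rw [div_le_one h2]
    exact le_trans (min_le_right _ _) (le_max_left _ _)
  have hs₀key : ∀ k, s₀ k * max 1 (Complex.abs (z k)) ≤ |(z k).im| := by
    intro k
    have h2 : max 1 (Complex.abs (z k)) ≠ 0 :=
      ne_of_gt (lt_of_lt_of_le one_pos (le_max_left _ _))
    rw [hs₀def, div_mul_cancel₀ _ h2]
    exact min_le_left _ _
  set Q : (Fin n → ℝ) → ℝ := fun t => ∏ ℓ, (1 + (t ℓ) ^ 2)⁻¹ with hQdef
  set P : ℝ := ∏ k ∈ Finset.univ.erase j, (4 / s₀ k * (Complex.abs (z k) + 1)) with hPdef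
  have hP0 : 0 ≤ P := by
    apply Finset.prod_nonneg
    intro k hk
    have hkj : k ≠ j := (Finset.mem_erase.mp hk).1
    have h1 := hs₀pos k hkj
    exact mul_nonneg (div_nonneg (by norm_num) h1.le) (by positivity)
  set C : ℝ := 2 * (2 / 2 ^ n * (4 / sθ) * P) + 4 ^ n with hCdef
  clear_value sθ s₀ Q P C
  have hev : ∀ᶠ w in l, 1 ≤ Complex.abs w ∧ sθ * max 1 (Complex.abs w) ≤ |w.im|
      ∧ w.im ≠ 0 := by
    filter_upwards [hl1.eventually_ge_atTop 1, hl2] with w h1 h2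
    have hmax : max 1 (Complex.abs w) = Complex.abs w := max_eq_right h1
    refine ⟨h1, by rw [hmax]; exact h2, ?_⟩
    have h3 : 0 < |w.im| := lt_of_lt_of_le (by nlinarith) h2
    exact fun h => by simp [h] at h3
  -- dominated convergence
  have key : Tendsto (fun w : ℂ => ∫ t, kernelK n (Function.update z j w) t / w ∂μ) l
      (𝓝 0) := by
    have hmeas : ∀ᶠ w in l, AEStronglyMeasurable
        (fun t => kernelK n (Function.update z j w) t / w) μ :=
      Eventually.of_forall fun w =>
        ((kernelK_measurable n _).div_const w).aestronglyMeasurable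
    have hbound : ∀ᶠ w in l, ∀ᵐ t ∂μ,
        ‖kernelK n (Function.update z j w) t / w‖ ≤ C * Q t := by
      filter_upwards [hev] with w hw
      obtain ⟨hw1, hw2, hw3⟩ := hw
      apply ae_of_all
      intro t
      set ζ : Fin n → ℂ := Function.update z j w with hζdef
      set s : Fin n → ℝ := Function.update s₀ j sθ with hsdef
      have hs0 : ∀ ℓ, 0 < s ℓ := by
        intro ℓ
        rcases eq_or_ne ℓ j with rfl | hℓ
        · simpa [hsdef] using hsθ0
        · simpa [hsdef, Function.update_of_ne hℓ] using hs₀pos ℓ hℓ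
      have hs1 : ∀ ℓ, s ℓ ≤ 1 := by
        intro ℓ
        rcases eq_or_ne ℓ j with rfl | hℓ
        · simpa [hsdef] using hsθ1
        · simpa [hsdef, Function.update_of_ne hℓ] using hs₀le ℓ
      have hζk : ∀ ℓ, s ℓ * max 1 (Complex.abs (ζ ℓ)) ≤ |(ζ ℓ).im| := by
        intro ℓ
        rcases eq_or_ne ℓ j with rfl | hℓ
        · simpa [hsdef, hζdef] using hw2
        · simpa [hsdef, hζdef, Function.update_of_ne hℓ] using hs₀key ℓ
      have hbd := kernel_bound n ζ s hs0 hs1 hζk t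
      have hprod : (∏ ℓ, (4 / s ℓ * (Complex.abs (ζ ℓ) + 1))) =
          (4 / sθ * (Complex.abs w + 1)) * P := by
        have hfun : (fun ℓ => 4 / s ℓ * (Complex.abs (ζ ℓ) + 1)) =
            Function.update (fun k => 4 / s₀ k * (Complex.abs (z k) + 1)) j
              (4 / sθ * (Complex.abs w + 1)) := by
          funext ℓ
          rcases eq_or_ne ℓ j with rfl | hℓ
          · simp [hsdef, hζdef]
          · simp [hsdef, hζdef, Function.update_of_ne hℓ]
        rw [hfun, Finset.prod_update_of_mem (Finset.mem_univ j), hPdef, Finset.erase_eq]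
      have hQ0 : 0 ≤ Q t := by
        rw [hQdef]
        exact Finset.prod_nonneg fun ℓ _ => by positivity
      have habsw : 0 < Complex.abs w := lt_of_lt_of_le one_pos hw1
      rw [norm_div, Complex.norm_eq_abs, Complex.norm_eq_abs, div_le_iff₀ habsw]
      rw [hprod] at hbd
      have hQt : (∏ ℓ, (1 + (t ℓ) ^ 2)⁻¹) = Q t := by rw [hQdef]
      rw [hQt] at hbd
      calc Complex.abs (kernelK n ζ t)
          ≤ (2 / 2 ^ n * (4 / sθ * (Complex.abs w + 1) * P) + 4 ^ n) * Q t := hbd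
        _ = (2 / 2 ^ n * (4 / sθ) * P * (Complex.abs w + 1) + 4 ^ n) * Q t := by ring
        _ ≤ (2 * (2 / 2 ^ n * (4 / sθ) * P) + 4 ^ n) * Q t * Complex.abs w := by
            apply mul_bound_aux
            · exact mul_nonneg (mul_nonneg (by positivity)
                (div_nonneg (by norm_num) hsθ0.le)) hP0
            · exact hQ0
            · positivity
            · exact hw1
        _ = C * Q t * Complex.abs w := by rw [hCdef]
    have hint : Integrable (fun t => C * Q t) μ := by
      simp only [hQdef]
      exact Q_integrable n μ hμ C
    have hlim : ∀ᵐ t ∂μ, Tendsto (fun w : ℂ => kernelK n (Function.update z j w) t / w) l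
        (𝓝 0) := by
      apply ae_of_all
      intro t
      set R : ℂ := ∏ k ∈ Finset.univ.erase j,
        ((((t k : ℝ) : ℂ) - z k)⁻¹ - (((t k : ℝ) : ℂ) + Complex.I)⁻¹) with hRdef
      set G : ℂ := ∏ ℓ : Fin n,
        ((((t ℓ : ℝ) : ℂ) - Complex.I)⁻¹ - (((t ℓ : ℝ) : ℂ) + Complex.I)⁻¹) with hGdef
      have hRw : ∀ w : ℂ, kernelK n (Function.update z j w) t =
          Complex.I * ((2 / (2 * Complex.I) ^ n) *
            (((((t j : ℝ) : ℂ) - w)⁻¹ - (((t j : ℝ) : ℂ) + Complex.I)⁻¹) * R) -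
            (1 / (2 * Complex.I) ^ n) * G) := by
        intro w
        unfold kernelK
        have hfun : (fun ℓ => (((t ℓ : ℝ) : ℂ) - Function.update z j w ℓ)⁻¹ -
              (((t ℓ : ℝ) : ℂ) + Complex.I)⁻¹) =
            Function.update (fun k => (((t k : ℝ) : ℂ) - z k)⁻¹ -
              (((t k : ℝ) : ℂ) + Complex.I)⁻¹) j
              ((((t j : ℝ) : ℂ) - w)⁻¹ - (((t j : ℝ) : ℂ) + Complex.I)⁻¹) := by
          funext ℓ
          rcases eq_or_ne ℓ j with rfl | hℓ
          · simp
          · simp [Function.update_of_ne hℓ]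
        rw [hfun, Finset.prod_update_of_mem (Finset.mem_univ j), hRdef, hGdef,
          Finset.erase_eq]
      have habs : Tendsto (fun w : ℂ => ‖w‖) l atTop := by
        simpa [Complex.norm_eq_abs] using hl1
      have h1 : Tendsto (fun w : ℂ => (((t j : ℝ) : ℂ) - w)⁻¹) l (𝓝 0) := by
        rw [tendsto_zero_iff_norm_tendsto_zero]
        simp only [norm_inv]
        apply Tendsto.inv_tendsto_atTop
        apply tendsto_atTop_mono ?_ (tendsto_atTop_add_const_right _
          (-‖((t j : ℝ) : ℂ)‖) habs)
        intro w
        have h2 := norm_sub_norm_le w ((t j : ℝ) : ℂ)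
        have h3 : ‖w - ((t j : ℝ) : ℂ)‖ = ‖((t j : ℝ) : ℂ) - w‖ := norm_sub_rev _ _
        linarith
      have hinv : Tendsto (fun w : ℂ => w⁻¹) l (𝓝 0) := by
        rw [tendsto_zero_iff_norm_tendsto_zero]
        simp only [norm_inv]
        exact habs.inv_tendsto_atTop
      have hK : Tendsto (fun w : ℂ => kernelK n (Function.update z j w) t) l
          (𝓝 (Complex.I * ((2 / (2 * Complex.I) ^ n) *
            ((0 - (((t j : ℝ) : ℂ) + Complex.I)⁻¹) * R) -
            (1 / (2 * Complex.I) ^ n) * G))) := by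
        simp only [hRw]
        exact ((((h1.sub_const (((t j : ℝ) : ℂ) + Complex.I)⁻¹).mul_const R).const_mul
          (2 / (2 * Complex.I) ^ n)).sub_const
            ((1 / (2 * Complex.I) ^ n) * G)).const_mul Complex.I
      have hfinal := hK.mul hinv
      rw [mul_zero] at hfinal
      simpa [div_eq_mul_inv] using hfinal
    have := tendsto_integral_filter_of_dominated_convergence (fun t => C * Q t)
      hmeas hbound hint hlim
    simpa using this
  have hfin : Tendsto (fun w : ℂ =>
      (1 / (Real.pi : ℂ) ^ n) * ∫ t, kernelK n (Function.update z j w) t / w ∂μ) l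
      (𝓝 0) := by
    have := key.const_mul (1 / (Real.pi : ℂ) ^ n)
    rwa [mul_zero] at this
  refine Tendsto.congr' ?_ hfin
  filter_upwards [hev] with w hw
  obtain ⟨hw1, hw2, hw3⟩ := hw
  have hcut : Function.update z j w ∈ polyCutPlane n := by
    intro k
    rcases eq_or_ne k j with rfl | hk
    · simpa using hw3
    · simpa [Function.update_of_ne hk] using hz k hk
  rw [integral_div, hg _ hcut, mul_div_assoc]

/-- Lemma 2.2: a Cauchy-type function `g` satisfies `g(z)/z_j → 0` non-tangentially, in both
the upper and lower Stoltz domains, for each coordinate `j`. -/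
theorem cauchy_type_stoltz_limit
    (n : ℕ) (μ : Measure (Fin n → ℝ)) (hμ : GrowthCondition n μ)
    (g : (Fin n → ℂ) → ℂ)
    (hg : ∀ z ∈ polyCutPlane n,
      g z = (1 / (Real.pi : ℂ) ^ n) * ∫ t, kernelK n z t ∂μ)
    (j : Fin n) (θ : ℝ) (hθ1 : 0 < θ) (hθ2 : θ ≤ Real.pi / 2)
    (z : Fin n → ℂ) (hz : ∀ k, k ≠ j → (z k).im ≠ 0) :
    Filter.Tendsto (fun w : ℂ => g (Function.update z j w) / w)
      (stoltzFilter (upperStoltz θ)) (nhds 0) ∧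
    Filter.Tendsto (fun w : ℂ => g (Function.update z j w) / w)
      (stoltzFilter (lowerStoltz θ)) (nhds 0) := by

  have hsin : ∀ x, θ ≤ x → x ≤ Real.pi - θ → Real.sin θ ≤ Real.sin x := by
    intro x h1 h2
    have hmono := Real.strictMonoOn_sin.monotoneOn
    rcases le_or_gt x (Real.pi / 2) with hc | hc
    · exact hmono ⟨by linarith [Real.pi_pos], hθ2⟩
        ⟨by linarith [Real.pi_pos], hc⟩ h1
    · rw [show Real.sin x = Real.sin (Real.pi - x) from (Real.sin_pi_sub x).symm]
      refine hmono ?_ ?_ ?_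
      · exact ⟨by linarith [Real.pi_pos], hθ2⟩
      · exact ⟨by linarith [Real.pi_pos], by linarith [Real.pi_pos]⟩
      · linarith
  have hup : ∀ w ∈ upperStoltz θ, Real.sin θ * Complex.abs w ≤ |w.im| := by
    intro w hw
    obtain ⟨him, h1, h2⟩ := hw
    have hw0 : w ≠ 0 := by
      intro h; rw [h] at him; simp at him
    have hsa := hsin (Complex.arg w) h1 h2
    have him2 : Real.sin (Complex.arg w) = w.im / Complex.abs w := Complex.sin_arg w
    have habs0 : 0 < Complex.abs w := Complex.abs.pos hw0
    calc Real.sin θ * Complex.abs w ≤ Real.sin (Complex.arg w) * Complex.abs w :=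
        mul_le_mul_of_nonneg_right hsa habs0.le
      _ = w.im := by rw [him2]; field_simp
      _ ≤ |w.im| := le_abs_self _
  have hlow : ∀ w ∈ lowerStoltz θ, Real.sin θ * Complex.abs w ≤ |w.im| := by
    intro w hw
    have := hup _ hw
    simpa [Complex.abs_conj, Complex.conj_im, abs_neg] using this
  have hicg : ∀ S : Set ℂ, (stoltzFilter S).IsCountablyGenerated := by
    intro S
    unfold stoltzFilter
    infer_instance
  have hl1 : ∀ S : Set ℂ, Tendsto Complex.abs (stoltzFilter S) atTop := by
    intro S
    exact tendsto_comap.mono_left inf_le_left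
  have hmem : ∀ S : Set ℂ, ∀ᶠ w in stoltzFilter S, w ∈ S := by
    intro S
    exact (eventually_inf_principal).mpr (Eventually.of_forall fun w hw => hw)
  constructor
  · haveI := hicg (upperStoltz θ)
    exact aux_tendsto n μ hμ g hg j θ hθ1 hθ2 z hz _ (hl1 _)
      ((hmem (upperStoltz θ)).mono fun w hw => hup w hw)
  · haveI := hicg (lowerStoltz θ)
    exact aux_tendsto n μ hμ g hg j θ hθ1 hθ2 z hz _ (hl1 _)
      ((hmem (lowerStoltz θ)).mono fun w hw => hlow w hw)
end
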